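/- arXiv:2403.00620 — 10 statements merged into one kernel-verified Lean document; each statement's English description precedes it below -/
import Mathlib

section
/- Let (X,d) be a metric space and m a Borel measure on X. Let c > 0 and let S : L∞(X,m) → L∞(X,m) be a map such that for every g ∈ L∞(X,m) the class Sg has a representative which is Lipschitz with Lipschitz constant at most c·‖g‖_{L∞}. Let f₀, f₁ ∈ L¹(X,m) with f₀ ≥ 0 and f₁ ≥ 0 m-a.e., and let u ∈ L¹(X,m) satisfy ∫_X g·u dm = ∫_X (Sg)·(f₀ − f₁) dm for every g ∈ L∞(X,m). Then for every real number W such that ∫_X h·(f₀ − f₁) dm ≤ W for every bounded 1-Lipschitz function h : X → ℝ, one has ‖u‖_{L¹} ≤ c·W. -/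
open MeasureTheory Filter

/-- inequality (eq:W1-He1) of Theorem th:W1-He1.
If `S : L∞ → L∞` maps every `g` to a class with a Lipschitz representative of constant
at most `c·‖g‖_∞`, `f₀, f₁ ∈ L¹` are a.e. nonnegative, and `u ∈ L¹` satisfies the duality
relation `∫ g·u = ∫ (Sg)·(f₀ − f₁)` for all `g ∈ L∞`, then for every upper bound `W` of
`∫ h·(f₀ − f₁)` over bounded `1`-Lipschitz functions `h`, one has `‖u‖_{L¹} ≤ c·W`. -/
theorem stmt0 {X : Type*} [MetricSpace X] [MeasurableSpace X] [BorelSpace X]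
    (μ : Measure X) (c : ℝ) (hc : 0 < c)
    (S : Lp ℝ ⊤ μ → Lp ℝ ⊤ μ)
    (hSlip : ∀ g : Lp ℝ ⊤ μ, ∃ h : X → ℝ,
      (∀ x y, |h x - h y| ≤ c * ‖g‖ * dist x y) ∧ ⇑(S g) =ᵐ[μ] h)
    (f₀ f₁ : X → ℝ) (hf₀ : Integrable f₀ μ) (hf₁ : Integrable f₁ μ)
    (hf₀pos : (0 : X → ℝ) ≤ᵐ[μ] f₀) (hf₁pos : (0 : X → ℝ) ≤ᵐ[μ] f₁)
    (u : X → ℝ) (hu : Integrable u μ)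
    (hdual : ∀ g : Lp ℝ ⊤ μ,
      ∫ x, g x * u x ∂μ = ∫ x, (S g) x * (f₀ x - f₁ x) ∂μ)
    (W : ℝ)
    (hW : ∀ h : X → ℝ, (∃ Cb : ℝ, ∀ x, |h x| ≤ Cb) →
      (∀ x y, |h x - h y| ≤ dist x y) →
      ∫ x, h x * (f₀ x - f₁ x) ∂μ ≤ W) :
    ∫ x, |u x| ∂μ ≤ c * W := by
  -- measurable representative of u
  obtain ⟨u', hu'meas, hu'ae⟩ : ∃ u' : X → ℝ, StronglyMeasurable u' ∧ u =ᵐ[μ] u' :=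
    ⟨hu.1.mk u, hu.1.stronglyMeasurable_mk, hu.1.ae_eq_mk⟩
  -- sign function
  set s : X → ℝ := fun x => if 0 ≤ u' x then 1 else -1 with hs_def
  have hs_meas : StronglyMeasurable s := by
    apply StronglyMeasurable.ite _ stronglyMeasurable_const stronglyMeasurable_const
    exact measurableSet_le measurable_const hu'meas.measurable
  have hs_bound : ∀ x, ‖s x‖ ≤ 1 := by
    intro x
    by_cases h : 0 ≤ u' x <;> simp [hs_def, h]
  have hs_mem : MemLp s ⊤ μ :=
    memLp_top_of_bound hs_meas.aestronglyMeasurable 1 (Eventually.of_forall hs_bound)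
  set g : Lp ℝ ⊤ μ := hs_mem.toLp s with hg_def
  have hg_ae : ⇑g =ᵐ[μ] s := hs_mem.coeFn_toLp
  have hg_norm : ‖g‖ ≤ 1 := by
    rw [Lp.norm_def]
    have h1 : eLpNorm (⇑g) ⊤ μ ≤ ENNReal.ofReal 1 := by
      rw [eLpNorm_congr_ae hg_ae, eLpNorm_exponent_top]
      exact eLpNormEssSup_le_of_ae_bound (Eventually.of_forall hs_bound)
    calc (eLpNorm (⇑g) ⊤ μ).toReal ≤ (ENNReal.ofReal 1).toReal :=
          ENNReal.toReal_mono (by simp) h1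
      _ = 1 := by simp
  -- Lipschitz representative of S g
  obtain ⟨h, hlip, hSg_ae⟩ := hSlip g
  set M : ℝ := ‖S g‖ with hM_def
  have hM_nonneg : 0 ≤ M := norm_nonneg _
  -- a.e. bound |S g x| ≤ M
  have hSg_bound : ∀ᵐ x ∂μ, ‖(S g) x‖ ≤ M := by
    have h1 : ∀ᵐ x ∂μ, (‖(S g) x‖₊ : ENNReal) ≤ eLpNormEssSup (⇑(S g)) μ :=
      ae_le_eLpNormEssSup
    have h2 : eLpNormEssSup (⇑(S g)) μ ≠ ⊤ := by
      rw [← eLpNorm_exponent_top]; exact (Lp.eLpNorm_lt_top (S g)).ne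
    filter_upwards [h1] with x hx
    have := ENNReal.toReal_mono h2 hx
    simpa [hM_def, Lp.norm_def, eLpNorm_exponent_top] using this
  -- truncation of h
  set h' : X → ℝ := fun x => max (-M) (min M (h x)) with hh'_def
  have hh'_bound : ∀ x, |h' x| ≤ M := by
    intro x
    rw [abs_le]
    constructor
    · exact neg_le_neg_iff.mpr le_rfl |>.trans (le_max_left _ _)
    · exact max_le (by linarith) ((min_le_left _ _))
  have hh'_lip : ∀ x y, |h' x - h' y| ≤ c * dist x y := by
    intro x y
    have h1 : |h' x - h' y| ≤ |min M (h x) - min M (h y)| := by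
      rw [hh'_def]
      simp only [max_comm (-M)]
      exact abs_max_sub_max_le_abs _ _ _
    have h2 : |min M (h x) - min M (h y)| ≤ |h x - h y| := by
      have := abs_min_sub_min_le_max M (h x) M (h y)
      simpa using this
    have h3 : c * ‖g‖ * dist x y ≤ c * dist x y := by
      have : c * ‖g‖ ≤ c * 1 := mul_le_mul_of_nonneg_left hg_norm hc.le
      nlinarith [dist_nonneg (x := x) (y := y)]
    exact h1.trans (h2.trans ((hlip x y).trans h3))
  -- h' = h a.e. (where |h| ≤ M) hence = S g a.e.
  have hh'_ae : ⇑(S g) =ᵐ[μ] h' := by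
    filter_upwards [hSg_ae, hSg_bound] with x hx hbx
    have hb : |h x| ≤ M := by rw [← hx]; simpa using hbx
    rw [abs_le] at hb
    rw [hh'_def]
    simp only
    rw [min_eq_right hb.2, max_eq_right hb.1, hx]
  -- main chain
  have step1 : ∫ x, |u x| ∂μ = ∫ x, (g : X → ℝ) x * u x ∂μ := by
    apply integral_congr_ae
    filter_upwards [hu'ae, hg_ae] with x hx hgx
    rw [hgx, hs_def]
    by_cases hpos : 0 ≤ u' x
    · simp [hpos, hx, abs_of_nonneg hpos]
    · push_neg at hpos
      simp [hpos.not_ge, hx, abs_of_neg hpos]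
  have step2 : ∫ x, (S g) x * (f₀ x - f₁ x) ∂μ = ∫ x, h' x * (f₀ x - f₁ x) ∂μ := by
    apply integral_congr_ae
    filter_upwards [hh'_ae] with x hx
    rw [hx]
  have step3 : ∫ x, h' x * (f₀ x - f₁ x) ∂μ ≤ c * W := by
    have key := hW (fun x => h' x / c) ⟨M / c, fun x => by
        rw [abs_div, abs_of_pos hc]
        exact div_le_div_of_nonneg_right (hh'_bound x) hc.le |>.trans le_rfl⟩
      (fun x y => by
        rw [div_sub_div_same, abs_div, abs_of_pos hc, div_le_iff₀ hc]
        calc |h' x - h' y| ≤ c * dist x y := hh'_lip x y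
          _ = dist x y * c := mul_comm _ _)
    have heq : ∫ x, h' x * (f₀ x - f₁ x) ∂μ = c * ∫ x, (h' x / c) * (f₀ x - f₁ x) ∂μ := by
      rw [← MeasureTheory.integral_const_mul]
      apply integral_congr_ae
      filter_upwards with x
      field_simp
    rw [heq]
    exact mul_le_mul_of_nonneg_left key hc.le
  rw [step1, hdual g, step2]
  exact step3
end

section
/- Let (X,d) be a metric space and m a Borel measure on X. Let c > 0 and let S : L∞(X,m) → L∞(X,m) be a map such that for every g ∈ L∞(X,m) one has ‖Sg‖_{L∞} ≤ ‖g‖_{L∞} and the class Sg has a representative which is Lipschitz with Lipschitz constant at most c·‖g‖_{L∞}. Let f₀, f₁ ∈ L¹(X,m) with f₀ ≥ 0 and f₁ ≥ 0 m-a.e., and let u ∈ L¹(X,m) satisfy ∫_X g·u dm = ∫_X (Sg)·(f₀ − f₁) dm for every g ∈ L∞(X,m). Then for every real number B such that ∫_X h·(f₀ − f₁) dm ≤ B for every bounded Lipschitz function h : X → ℝ with Lipschitz constant ≤ 1 and sup_X |h| ≤ 1, one has ‖u‖_{L¹} ≤ max(c,1)·B. -/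
open MeasureTheory Filter

/-- inequality (eq:referee_bl_ac) of Theorem res:referee_bl.
If `S : L∞ → L∞` satisfies `‖Sg‖_∞ ≤ ‖g‖_∞` and maps every `g` to a class with a Lipschitz
representative of constant at most `c·‖g‖_∞`, `f₀, f₁ ∈ L¹` are a.e. nonnegative, and
`u ∈ L¹` satisfies `∫ g·u = ∫ (Sg)·(f₀ − f₁)` for all `g ∈ L∞`, then for every upper bound
`B` of `∫ h·(f₀ − f₁)` over bounded Lipschitz `h` with `Lip(h) ≤ 1` and `sup|h| ≤ 1`,
one has `‖u‖_{L¹} ≤ max(c,1)·B`. -/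
theorem stmt1 {X : Type*} [MetricSpace X] [MeasurableSpace X] [BorelSpace X]
    (μ : Measure X) (c : ℝ) (hc : 0 < c)
    (S : Lp ℝ ⊤ μ → Lp ℝ ⊤ μ)
    (hSnorm : ∀ g : Lp ℝ ⊤ μ, ‖S g‖ ≤ ‖g‖)
    (hSlip : ∀ g : Lp ℝ ⊤ μ, ∃ h : X → ℝ,
      (∀ x y, |h x - h y| ≤ c * ‖g‖ * dist x y) ∧ ⇑(S g) =ᵐ[μ] h)
    (f₀ f₁ : X → ℝ) (hf₀ : Integrable f₀ μ) (hf₁ : Integrable f₁ μ)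
    (hf₀pos : (0 : X → ℝ) ≤ᵐ[μ] f₀) (hf₁pos : (0 : X → ℝ) ≤ᵐ[μ] f₁)
    (u : X → ℝ) (hu : Integrable u μ)
    (hdual : ∀ g : Lp ℝ ⊤ μ,
      ∫ x, g x * u x ∂μ = ∫ x, (S g) x * (f₀ x - f₁ x) ∂μ)
    (B : ℝ)
    (hB : ∀ h : X → ℝ, (∀ x y, |h x - h y| ≤ dist x y) → (∀ x, |h x| ≤ 1) →
      ∫ x, h x * (f₀ x - f₁ x) ∂μ ≤ B) :
    ∫ x, |u x| ∂μ ≤ max c 1 * B := by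
  set M : ℝ := max c 1 with hM
  have hM1 : (1 : ℝ) ≤ M := le_max_right _ _
  have hM0 : (0 : ℝ) < M := lt_of_lt_of_le one_pos hM1
  have hcM : c ≤ M := le_max_left _ _
  -- strongly measurable representative of u
  set v : X → ℝ := hu.1.mk u with hv
  have hvmeas : StronglyMeasurable v := hu.1.stronglyMeasurable_mk
  have huv : u =ᵐ[μ] v := hu.1.ae_eq_mk
  -- sign of v
  set g₀ : X → ℝ := fun x => if 0 < v x then 1 else if v x < 0 then -1 else 0 with hg₀
  have hg₀meas : Measurable g₀ := by
    apply Measurable.ite (measurableSet_lt measurable_const hvmeas.measurable)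
      measurable_const
    exact Measurable.ite (measurableSet_lt hvmeas.measurable measurable_const)
      measurable_const measurable_const
  have hg₀bd : ∀ x, |g₀ x| ≤ 1 := by
    intro x
    simp only [hg₀]
    split_ifs <;> simp
  have hg₀mul : ∀ x, g₀ x * v x = |v x| := by
    intro x
    simp only [hg₀]
    rcases lt_trichotomy (v x) 0 with h | h | h
    · rw [if_neg (by linarith), if_pos h, abs_of_neg h]; ring
    · simp [h]
    · rw [if_pos h, abs_of_pos h]; ring
  have hg₀mem : MemLp g₀ ⊤ μ :=
    memLp_top_of_bound hg₀meas.aestronglyMeasurable 1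
      (Eventually.of_forall fun x => by simpa using hg₀bd x)
  set g : Lp ℝ ⊤ μ := hg₀mem.toLp g₀ with hgdef
  have hgcoe : ⇑g =ᵐ[μ] g₀ := hg₀mem.coeFn_toLp
  have hgnorm : ‖g‖ ≤ 1 := by
    rw [hgdef, Lp.norm_toLp]
    have : eLpNorm g₀ ⊤ μ ≤ ENNReal.ofReal 1 := by
      rw [eLpNorm_exponent_top]
      exact eLpNormEssSup_le_of_ae_bound
        (Eventually.of_forall fun x => by simpa using hg₀bd x)
    calc (eLpNorm g₀ ⊤ μ).toReal ≤ (ENNReal.ofReal 1).toReal :=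
          ENNReal.toReal_mono (by simp) this
      _ = 1 := by simp
  -- the Lipschitz representative of S g
  obtain ⟨h, hhlip, hhae⟩ := hSlip g
  have hSgnorm : ‖S g‖ ≤ 1 := le_trans (hSnorm g) hgnorm
  -- a.e. bound on S g, hence on h
  have hSgbd : ∀ᵐ x ∂μ, |(S g) x| ≤ 1 := by
    have h1 : ∀ᵐ x ∂μ, ‖(S g) x‖₊ ≤ eLpNormEssSup (⇑(S g)) μ := ae_le_eLpNormEssSup
    have h2 : eLpNormEssSup (⇑(S g)) μ = ENNReal.ofReal ‖S g‖ := by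
      rw [Lp.norm_def, eLpNorm_exponent_top, ENNReal.ofReal_toReal]
      rw [← eLpNorm_exponent_top]
      exact Lp.eLpNorm_ne_top (S g)
    filter_upwards [h1] with x hx
    rw [h2] at hx
    have h3 : (‖(S g) x‖₊ : ENNReal) ≤ 1 := by
      refine hx.trans ?_
      calc ENNReal.ofReal ‖S g‖ ≤ ENNReal.ofReal 1 := ENNReal.ofReal_le_ofReal hSgnorm
        _ = 1 := ENNReal.ofReal_one
    rw [ENNReal.coe_le_one_iff] at h3
    have h4 := NNReal.coe_le_coe.mpr h3
    simpa [Real.norm_eq_abs] using h4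
  have hhbd : ∀ᵐ x ∂μ, |h x| ≤ 1 := by
    filter_upwards [hSgbd, hhae] with x hx hxe
    rw [← hxe]; exact hx
  -- truncation of h
  set h₀ : X → ℝ := fun x => max (-1) (min 1 (h x)) with hh₀
  have hh₀bd : ∀ x, |h₀ x| ≤ 1 := by
    intro x
    rw [abs_le]
    constructor
    · exact le_max_left _ _
    · exact max_le (by norm_num) (min_le_left _ _)
  have hh₀lip : ∀ x y, |h₀ x - h₀ y| ≤ c * dist x y := by
    intro x y
    have l1 : |h₀ x - h₀ y| ≤ |h x - h y| := by
      have s1 : |max (min 1 (h x)) (-1) - max (min 1 (h y)) (-1)| ≤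
          |min 1 (h x) - min 1 (h y)| := abs_max_sub_max_le_abs _ _ _
      have s2 : |min 1 (h x) - min 1 (h y)| ≤ |h x - h y| := by
        simpa using abs_min_sub_min_le_max (1:ℝ) (h x) 1 (h y)
      calc |h₀ x - h₀ y|
          = |max (min 1 (h x)) (-1) - max (min 1 (h y)) (-1)| := by
            simp only [hh₀, max_comm]
        _ ≤ |min 1 (h x) - min 1 (h y)| := s1
        _ ≤ |h x - h y| := s2
    refine l1.trans ((hhlip x y).trans ?_)
    have : c * ‖g‖ ≤ c * 1 := mul_le_mul_of_nonneg_left hgnorm hc.le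
    nlinarith [dist_nonneg (x := x) (y := y)]
  have hh₀ae : h =ᵐ[μ] h₀ := by
    filter_upwards [hhbd] with x hx
    rw [abs_le] at hx
    simp only [hh₀]
    rw [min_eq_right hx.2, max_eq_right hx.1]
  -- apply hB to h₀ / M
  have hBapp : ∫ x, (h₀ x / M) * (f₀ x - f₁ x) ∂μ ≤ B := by
    apply hB
    · intro x y
      rw [div_sub_div_same, abs_div, abs_of_pos hM0, div_le_iff₀ hM0]
      calc |h₀ x - h₀ y| ≤ c * dist x y := hh₀lip x y
        _ ≤ dist x y * M := by nlinarith [dist_nonneg (x := x) (y := y)]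
    · intro x
      rw [abs_div, abs_of_pos hM0, div_le_one hM0]
      exact (hh₀bd x).trans hM1
  have key : ∫ x, h₀ x * (f₀ x - f₁ x) ∂μ ≤ M * B := by
    have : ∫ x, h₀ x * (f₀ x - f₁ x) ∂μ = M * ∫ x, (h₀ x / M) * (f₀ x - f₁ x) ∂μ := by
      rw [← integral_const_mul]
      congr 1 with x
      field_simp
    rw [this]
    exact mul_le_mul_of_nonneg_left hBapp hM0.le
  -- assemble
  have e1 : ∫ x, |u x| ∂μ = ∫ x, (g : X → ℝ) x * u x ∂μ := by
    apply integral_congr_ae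
    filter_upwards [hgcoe, huv] with x hgx hux
    rw [hgx, hux, hg₀mul]
  have e2 : ∫ x, (S g) x * (f₀ x - f₁ x) ∂μ = ∫ x, h₀ x * (f₀ x - f₁ x) ∂μ := by
    apply integral_congr_ae
    filter_upwards [hhae, hh₀ae] with x h1 h2
    rw [h1, h2]
  calc ∫ x, |u x| ∂μ = ∫ x, (g : X → ℝ) x * u x ∂μ := e1
    _ = ∫ x, (S g) x * (f₀ x - f₁ x) ∂μ := hdual g
    _ = ∫ x, h₀ x * (f₀ x - f₁ x) ∂μ := e2
    _ ≤ M * B := key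
end

section
/- Let (X,d) be a complete separable metric space and m a nonnegative Borel measure on X which is finite on bounded sets and whose support is all of X. Then for every finite nonnegative Borel measure μ on X and every ε > 0 there exists f ∈ L¹(X,m) with f ≥ 0 m-a.e. such that |∫_X h dμ − ∫_X h·f dm| ≤ ε for every bounded Lipschitz function h : X → ℝ with Lipschitz constant ≤ 1 and sup_X |h| ≤ 1. -/
open MeasureTheory Filter Metric Set Topology

lemma key_est {X : Type*} [MetricSpace X] [MeasurableSpace X] [OpensMeasurableSpace X]
    (ρ : Measure X) {s : Set X} (hfin : ρ s < ⊤)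
    {z : X} {δ : ℝ} (hsub : s ⊆ Metric.ball z δ)
    {h : X → ℝ} (hc : Continuous h)
    (hlip : ∀ x y, |h x - h y| ≤ dist x y) (hb : ∀ x, |h x| ≤ 1) :
    |(∫ x in s, h x ∂ρ) - h z * (ρ s).toReal| ≤ δ * (ρ s).toReal := by
  haveI : IsFiniteMeasure (ρ.restrict s) := ⟨by simpa [Measure.restrict_apply_univ] using hfin⟩
  have hint : IntegrableOn h s ρ :=
    Integrable.mono' (integrable_const 1) hc.aestronglyMeasurable.restrict
      (ae_of_all _ fun x => by simpa using hb x)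
  have hcint : IntegrableOn (fun _ => h z) s ρ := integrableOn_const hfin.ne
  have heq : (∫ x in s, h x ∂ρ) - h z * (ρ s).toReal = ∫ x in s, (h x - h z) ∂ρ := by
    rw [integral_sub hint hcint, setIntegral_const, smul_eq_mul, mul_comm]
    rfl
  rw [heq]
  have := norm_setIntegral_le_of_norm_le_const (f := fun x => h x - h z) (C := δ) hfin
    (fun x hx => by
      have hd : dist x z < δ := mem_ball.1 (hsub hx)
      calc ‖h x - h z‖ = |h x - h z| := rfl
        _ ≤ dist x z := hlip x z
        _ ≤ δ := hd.le)
  simpa [Measure.real] using this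

/-- Corollary res:density_ac.
On a complete separable metric space with a nonnegative Borel measure `μ` which is finite
on bounded sets and has full support, every finite nonnegative Borel measure `ν` can be
approximated in the bounded-Lipschitz dual distance by measures absolutely continuous with
respect to `μ`: for every `ε > 0` there is a nonnegative `f ∈ L¹(μ)` such that
`|∫ h dν − ∫ h·f dμ| ≤ ε` for every Lipschitz `h` with `Lip(h) ≤ 1` and `sup|h| ≤ 1`. -/
theorem stmt3 {X : Type*} [MetricSpace X] [CompleteSpace X] [SecondCountableTopology X]
    [MeasurableSpace X] [BorelSpace X]
    (μ : Measure X)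
    (hfinbdd : ∀ s : Set X, Bornology.IsBounded s → μ s < ⊤)
    (hsupp : ∀ (x : X) (r : ℝ), 0 < r → 0 < μ (Metric.ball x r))
    (ν : Measure X) [IsFiniteMeasure ν] (ε : ℝ) (hε : 0 < ε) :
    ∃ f : X → ℝ, Integrable f μ ∧ (0 : X → ℝ) ≤ᵐ[μ] f ∧
      ∀ h : X → ℝ, (∀ x y, |h x - h y| ≤ dist x y) → (∀ x, |h x| ≤ 1) →
        |(∫ x, h x ∂ν) - ∫ x, h x * f x ∂μ| ≤ ε := by
  rcases isEmpty_or_nonempty X with hX | hX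
  · refine ⟨0, integrable_zero _ _ _, Filter.EventuallyLE.refl _ _, fun h _ _ => ?_⟩
    simp only [integral_of_isEmpty, Pi.zero_apply, mul_zero, sub_zero, abs_zero]
    exact hε.le
  -- setup
  set M : ℝ := (ν Set.univ).toReal with hMdef
  have hM0 : 0 ≤ M := ENNReal.toReal_nonneg
  set δ : ℝ := ε / (4 * (M + 1)) with hδdef
  have hδpos : 0 < δ := by positivity
  obtain ⟨D, hD⟩ : ∃ D : ℕ → X, DenseRange D :=
    ⟨TopologicalSpace.denseSeq X, TopologicalSpace.denseRange_denseSeq X⟩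
  set B : ℕ → Set X := fun n => Metric.ball (D n) δ with hBdef
  have hBmeas : ∀ n, MeasurableSet (B n) := fun n => measurableSet_ball
  have hBfin : ∀ n, μ (B n) < ⊤ := fun n => hfinbdd _ isBounded_ball
  have hBpos : ∀ n, 0 < μ (B n) := fun n => hsupp (D n) δ hδpos
  have hBunion : (⋃ n, B n) = Set.univ := by
    refine Set.eq_univ_of_forall fun x => ?_
    obtain ⟨n, hn⟩ := hD.exists_dist_lt x hδpos
    exact Set.mem_iUnion.2 ⟨n, mem_ball.2 hn⟩
  set A : ℕ → Set X := disjointed B with hAdef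
  have hAmeas : ∀ n, MeasurableSet (A n) := MeasurableSet.disjointed hBmeas
  have hAdisj : Pairwise (Function.onFun Disjoint A) := disjoint_disjointed B
  have hAsub : ∀ n, A n ⊆ B n := disjointed_subset B
  have hAfin : ∀ n, ν (A n) < ⊤ := fun n => measure_lt_top ν _
  -- choose N with small tail
  have htend : Tendsto (fun N => ν (⋃ n ∈ Finset.range N, A n)) atTop (𝓝 (ν Set.univ)) := by
    have hmono : Monotone (fun N => ⋃ n ∈ Finset.range N, A n) := by
      intro a b hab
      exact Set.biUnion_subset_biUnion_left (fun n hn => Finset.mem_range.2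
        (lt_of_lt_of_le (Finset.mem_range.1 hn) hab))
    have := tendsto_measure_iUnion_atTop (μ := ν) hmono
    have huniv : (⋃ N, ⋃ n ∈ Finset.range N, A n) = Set.univ := by
      rw [← hBunion, ← iUnion_disjointed (f := B)]
      ext x
      simp only [Set.mem_iUnion, Finset.mem_range]
      exact ⟨fun ⟨N, n, hn, hx⟩ => ⟨n, hx⟩, fun ⟨n, hx⟩ => ⟨n + 1, n, Nat.lt_succ_self n, hx⟩⟩
    rw [huniv] at this
    exact this
  have htendR : Tendsto (fun N => (ν (⋃ n ∈ Finset.range N, A n)).toReal) atTop (𝓝 M) := by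
    exact (ENNReal.tendsto_toReal (measure_ne_top ν _)).comp htend
  obtain ⟨N, hN⟩ : ∃ N, M - (ν (⋃ n ∈ Finset.range N, A n)).toReal ≤ ε / 2 := by
    have := htendR.eventually (eventually_ge_nhds (show M - ε/2 < M by linarith))
    obtain ⟨N, hN⟩ := this.exists
    exact ⟨N, by linarith⟩
  set U : Set X := ⋃ n ∈ Finset.range N, A n with hUdef
  have hUmeas : MeasurableSet U := Finset.measurableSet_biUnion _ (fun n _ => hAmeas n)
  have htail : (ν Uᶜ).toReal ≤ ε / 2 := by
    have hsub : U ⊆ Set.univ := Set.subset_univ _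
    have := measure_diff hsub hUmeas.nullMeasurableSet (measure_ne_top ν U)
    have hcompl : ν Uᶜ = ν Set.univ - ν U := by
      rw [Set.compl_eq_univ_diff]; exact this
    rw [hcompl, ENNReal.toReal_sub_of_le (measure_mono hsub) (measure_ne_top ν _)]
    exact hN
  -- the density
  set c : ℕ → ℝ := fun n => (ν (A n)).toReal / (μ (B n)).toReal with hcdef
  have hc0 : ∀ n, 0 ≤ c n := fun n => div_nonneg ENNReal.toReal_nonneg ENNReal.toReal_nonneg
  have hμBpos : ∀ n, 0 < (μ (B n)).toReal := fun n =>
    ENNReal.toReal_pos (hBpos n).ne' (hBfin n).ne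
  have hcmul : ∀ n, c n * (μ (B n)).toReal = (ν (A n)).toReal := fun n =>
    div_mul_cancel₀ _ (hμBpos n).ne'
  set f : X → ℝ := fun x => ∑ n ∈ Finset.range N, (B n).indicator (fun _ => c n) x with hfdef
  have hf_int : Integrable f μ := by
    refine integrable_finset_sum _ fun n _ => ?_
    exact (integrable_indicator_iff (hBmeas n)).2 (integrableOn_const (hBfin n).ne)
  refine ⟨f, hf_int, ae_of_all _ fun x => Finset.sum_nonneg fun n _ =>
    Set.indicator_nonneg (fun _ _ => hc0 n) x, fun h hlip hb => ?_⟩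
  -- h is continuous
  have hc' : Continuous h := by
    have : LipschitzWith 1 h := LipschitzWith.of_dist_le_mul fun x y => by
      rw [Real.dist_eq, NNReal.coe_one, one_mul]; exact hlip x y
    exact this.continuous
  -- integrability of h wrt ν
  have hint_ν : Integrable h ν :=
    Integrable.mono' (integrable_const 1) hc'.aestronglyMeasurable
      (ae_of_all _ fun x => by simpa using hb x)
  -- rewrite ∫ h f dμ
  have hmulint : ∀ n, Integrable (fun x => h x * (B n).indicator (fun _ => c n) x) μ := by
    intro n
    have : (fun x => h x * (B n).indicator (fun _ => c n) x)
        = (B n).indicator (fun x => h x * c n) := by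
      ext x
      by_cases hx : x ∈ B n <;> simp [Set.indicator_of_mem, Set.indicator_of_notMem, hx]
    rw [this]
    refine (integrable_indicator_iff (hBmeas n)).2 ?_
    haveI : IsFiniteMeasure (μ.restrict (B n)) :=
      ⟨by simpa [Measure.restrict_apply_univ] using hBfin n⟩
    refine Integrable.mono' (integrable_const (|c n|))
      ((hc'.mul continuous_const).aestronglyMeasurable.restrict)
      (ae_of_all _ fun x => ?_)
    calc ‖h x * c n‖ = |h x| * |c n| := abs_mul _ _
      _ ≤ 1 * |c n| := mul_le_mul_of_nonneg_right (hb x) (abs_nonneg _)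
      _ = |c n| := one_mul _
  have hintfmu : (∫ x, h x * f x ∂μ) = ∑ n ∈ Finset.range N, c n * ∫ x in B n, h x ∂μ := by
    have : (fun x => h x * f x)
        = fun x => ∑ n ∈ Finset.range N, h x * (B n).indicator (fun _ => c n) x := by
      ext x; simp only [hfdef, Finset.mul_sum]
    rw [this, integral_finset_sum _ (fun n _ => hmulint n)]
    refine Finset.sum_congr rfl fun n _ => ?_
    have heqn : (fun x => h x * (B n).indicator (fun _ => c n) x)
        = (B n).indicator (fun x => c n * h x) := by
      ext x
      by_cases hx : x ∈ B n <;>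
        simp [Set.indicator_of_mem, Set.indicator_of_notMem, hx, mul_comm]
    rw [heqn, integral_indicator (hBmeas n), integral_const_mul]
  -- decompose ∫ h dν
  have hintν_decomp : (∫ x, h x ∂ν) = (∑ n ∈ Finset.range N, ∫ x in A n, h x ∂ν)
      + ∫ x in Uᶜ, h x ∂ν := by
    rw [← integral_add_compl hUmeas hint_ν, hUdef,
      integral_biUnion_finset _ (fun n _ => hAmeas n)
        (hAdisj.set_pairwise _) (fun n _ => hint_ν.integrableOn)]
  -- per-term estimates
  have hterm : ∀ n, |(∫ x in A n, h x ∂ν) - c n * ∫ x in B n, h x ∂μ|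
      ≤ 2 * δ * (ν (A n)).toReal := by
    intro n
    have e1 : |(∫ x in A n, h x ∂ν) - h (D n) * (ν (A n)).toReal| ≤ δ * (ν (A n)).toReal :=
      key_est ν (hAfin n) ((hAsub n).trans (subset_refl _)) hc' hlip hb
    have e2 : |(∫ x in B n, h x ∂μ) - h (D n) * (μ (B n)).toReal| ≤ δ * (μ (B n)).toReal :=
      key_est μ (hBfin n) (subset_refl _) hc' hlip hb
    have e2' : |c n * (∫ x in B n, h x ∂μ) - h (D n) * (ν (A n)).toReal|
        ≤ δ * (ν (A n)).toReal := by
      have : c n * (∫ x in B n, h x ∂μ) - h (D n) * (ν (A n)).toReal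
          = c n * ((∫ x in B n, h x ∂μ) - h (D n) * (μ (B n)).toReal) := by
        rw [mul_sub, ← mul_assoc, mul_comm (c n) (h (D n)), mul_assoc, hcmul n]
      rw [this, abs_mul, abs_of_nonneg (hc0 n)]
      calc c n * |(∫ x in B n, h x ∂μ) - h (D n) * (μ (B n)).toReal|
          ≤ c n * (δ * (μ (B n)).toReal) := mul_le_mul_of_nonneg_left e2 (hc0 n)
        _ = δ * (c n * (μ (B n)).toReal) := by ring
        _ = δ * (ν (A n)).toReal := by rw [hcmul n]
    calc |(∫ x in A n, h x ∂ν) - c n * ∫ x in B n, h x ∂μ|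
        ≤ |(∫ x in A n, h x ∂ν) - h (D n) * (ν (A n)).toReal|
          + |h (D n) * (ν (A n)).toReal - c n * ∫ x in B n, h x ∂μ| :=
          abs_sub_le _ _ _
      _ = |(∫ x in A n, h x ∂ν) - h (D n) * (ν (A n)).toReal|
          + |c n * (∫ x in B n, h x ∂μ) - h (D n) * (ν (A n)).toReal| := by
          rw [abs_sub_comm (h (D n) * (ν (A n)).toReal)]
      _ ≤ δ * (ν (A n)).toReal + δ * (ν (A n)).toReal := add_le_add e1 e2'
      _ = 2 * δ * (ν (A n)).toReal := by ring
  -- final assembly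
  have h2δM : 2 * δ * M ≤ ε / 2 := by
    have hstep : 2 * δ * M ≤ 2 * δ * (M + 1) := by nlinarith [hδpos.le]
    have heq2 : 2 * δ * (M + 1) = ε / 2 := by
      rw [hδdef]
      have hM1 : (M + 1) ≠ 0 := by positivity
      field_simp
      ring
    linarith
  have hsumA : ∑ n ∈ Finset.range N, (ν (A n)).toReal ≤ M := by
    have hkey : ν U = ∑ n ∈ Finset.range N, ν (A n) :=
      measure_biUnion_finset (hAdisj.set_pairwise _) (fun n _ => hAmeas n)
    have heq3 : ∑ n ∈ Finset.range N, (ν (A n)).toReal = (ν U).toReal := by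
      rw [hkey, ENNReal.toReal_sum (fun n _ => measure_ne_top ν _)]
    rw [heq3, hMdef]
    exact ENNReal.toReal_mono (measure_ne_top ν _) (measure_mono (Set.subset_univ _))
  have htail_int : |∫ x in Uᶜ, h x ∂ν| ≤ (ν Uᶜ).toReal := by
    have := norm_setIntegral_le_of_norm_le_const (f := h) (C := 1) (measure_lt_top ν Uᶜ)
      (fun x _ => by simpa using hb x)
    simpa [Measure.real] using this
  have hsum_le : |∑ n ∈ Finset.range N, ((∫ x in A n, h x ∂ν) - c n * ∫ x in B n, h x ∂μ)|
      ≤ 2 * δ * M := by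
    calc |∑ n ∈ Finset.range N, ((∫ x in A n, h x ∂ν) - c n * ∫ x in B n, h x ∂μ)|
        ≤ ∑ n ∈ Finset.range N, |(∫ x in A n, h x ∂ν) - c n * ∫ x in B n, h x ∂μ| :=
          Finset.abs_sum_le_sum_abs _ _
      _ ≤ ∑ n ∈ Finset.range N, 2 * δ * (ν (A n)).toReal :=
          Finset.sum_le_sum fun n _ => hterm n
      _ = 2 * δ * ∑ n ∈ Finset.range N, (ν (A n)).toReal := by rw [Finset.mul_sum]
      _ ≤ 2 * δ * M := by
          have : (0:ℝ) ≤ 2 * δ := by positivity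
          exact mul_le_mul_of_nonneg_left hsumA this
  have hsplit : (∫ x, h x ∂ν) - ∫ x, h x * f x ∂μ
      = (∑ n ∈ Finset.range N, ((∫ x in A n, h x ∂ν) - c n * ∫ x in B n, h x ∂μ))
        + ∫ x in Uᶜ, h x ∂ν := by
    rw [hintν_decomp, hintfmu, Finset.sum_sub_distrib]
    ring
  rw [hsplit]
  calc |(∑ n ∈ Finset.range N, ((∫ x in A n, h x ∂ν) - c n * ∫ x in B n, h x ∂μ))
        + ∫ x in Uᶜ, h x ∂ν|
      ≤ |∑ n ∈ Finset.range N, ((∫ x in A n, h x ∂ν) - c n * ∫ x in B n, h x ∂μ)|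
        + |∫ x in Uᶜ, h x ∂ν| := abs_add_le _ _
    _ ≤ 2 * δ * M + (ν Uᶜ).toReal := add_le_add hsum_le htail_int
    _ ≤ ε / 2 + ε / 2 := add_le_add h2δM htail
    _ = ε := by ring
end

section
/- Let (X,d) be a nonempty metric space with diameter at most D < ∞ and let m be a Borel measure on X. Let c > 0 and let T : L∞(X,m) → L∞(X,m) be a linear map such that T maps the class of the constant function 1 to itself, and such that for every g ∈ L∞(X,m) the class Tg admits a representative which is Lipschitz with Lipschitz constant at most c·‖g‖_{L∞}. Then for every bounded Lipschitz function f : X → ℝ, the class T[f] admits a representative which is Lipschitz with Lipschitz constant at most D·c·Lip(f), where Lip(f) is the Lipschitz constant of f. -/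
open MeasureTheory Filter

/-- Lemma res:diam_ltl.
On a nonempty metric space of diameter at most `D`, if the linear map `T : L∞ → L∞`
preserves the class of the constant function `1` and satisfies the `L∞`-to-Lipschitz
contraction property with constant `c`, then for every bounded `L`-Lipschitz `f : X → ℝ`
the class `T[f]` admits a Lipschitz representative with constant at most `D·c·L`. -/
theorem stmt5 {X : Type*} [MetricSpace X] [Nonempty X] [MeasurableSpace X] [BorelSpace X]
    (μ : Measure X) (D : ℝ) (hD : ∀ x y : X, dist x y ≤ D)
    (c : ℝ) (hc : 0 < c)
    (T : Lp ℝ ⊤ μ →ₗ[ℝ] Lp ℝ ⊤ μ)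
    (hT1 : ∀ o : Lp ℝ ⊤ μ, ⇑o =ᵐ[μ] (fun _ => (1 : ℝ)) → ⇑(T o) =ᵐ[μ] (fun _ => (1 : ℝ)))
    (hTlip : ∀ g : Lp ℝ ⊤ μ, ∃ h : X → ℝ,
      (∀ x y, |h x - h y| ≤ c * ‖g‖ * dist x y) ∧ ⇑(T g) =ᵐ[μ] h) :
    ∀ (f : X → ℝ) (hf : MemLp f ⊤ μ) (L : ℝ), 0 ≤ L →
      (∀ x y, |f x - f y| ≤ L * dist x y) → (∃ Cb : ℝ, ∀ x, |f x| ≤ Cb) →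
      ∃ h : X → ℝ, (∀ x y, |h x - h y| ≤ D * c * L * dist x y) ∧
        ⇑(T (hf.toLp f)) =ᵐ[μ] h := by
  intro f hf L hL hfL _hb
  obtain ⟨x₀⟩ := ‹Nonempty X›
  have hD0 : (0 : ℝ) ≤ D := le_trans (by simp [dist_self]) (hD x₀ x₀)
  set a : ℝ := f x₀ with ha
  set g : X → ℝ := fun x => f x - a with hgdef
  have hg : MemLp g ⊤ μ := hf.sub (memLp_top_const a)
  have hOne : MemLp (fun _ : X => (1 : ℝ)) ⊤ μ := memLp_top_const 1
  set G : Lp ℝ ⊤ μ := hg.toLp g with hG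
  set One : Lp ℝ ⊤ μ := hOne.toLp _ with hOneL
  -- decomposition f = g + a • 1
  have hdec : hf.toLp f = G + a • One := by
    apply Lp.ext
    filter_upwards [hf.coeFn_toLp, Lp.coeFn_add G (a • One),
      Lp.coeFn_smul a One, hg.coeFn_toLp, hOne.coeFn_toLp] with x h1 h2 h3 h4 h5
    rw [h1, h2]
    simp only [Pi.add_apply, h4]
    have : (a • One) x = a • (One : X → ℝ) x := by rw [h3]; rfl
    rw [this, h5]
    rw [hG, h4]
    simp [hgdef]
  -- norm bound on G
  have hGnorm : ‖G‖ ≤ L * D := by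
    have hbound : ∀ᵐ x ∂μ, ‖g x‖ ≤ L * D := by
      refine Eventually.of_forall fun x => ?_
      have := hfL x x₀
      calc ‖g x‖ = |f x - a| := rfl
        _ ≤ L * dist x x₀ := this
        _ ≤ L * D := by exact mul_le_mul_of_nonneg_left (hD x x₀) hL
    have h1 : eLpNorm g ⊤ μ ≤ ENNReal.ofReal (L * D) := by
      rw [eLpNorm_exponent_top]
      exact eLpNormEssSup_le_of_ae_bound hbound
    rw [hG, Lp.norm_toLp]
    exact ENNReal.toReal_le_of_le_ofReal (mul_nonneg hL hD0) h1
  -- apply hypotheses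
  obtain ⟨h, hhlip, hTG⟩ := hTlip G
  have hTOne : ⇑(T One) =ᵐ[μ] (fun _ => (1 : ℝ)) := hT1 One hOne.coeFn_toLp
  refine ⟨fun x => h x + a, ?_, ?_⟩
  · intro x y
    have h1 : |h x + a - (h y + a)| = |h x - h y| := by ring_nf
    rw [h1]
    calc |h x - h y| ≤ c * ‖G‖ * dist x y := hhlip x y
      _ ≤ c * (L * D) * dist x y := by
          apply mul_le_mul_of_nonneg_right _ dist_nonneg
          exact mul_le_mul_of_nonneg_left hGnorm hc.le
      _ = D * c * L * dist x y := by ring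
  · rw [hdec, map_add, _root_.map_smul]
    filter_upwards [Lp.coeFn_add (T G) (a • T One), Lp.coeFn_smul a (T One),
      hTG, hTOne] with x h2 h3 h4 h5
    rw [h2]
    simp only [Pi.add_apply, h4]
    have : (a • T One) x = a • (T One : X → ℝ) x := by rw [h3]; rfl
    rw [this, h5]
    simp [mul_comm]
end

section
/- Let m be a finite measure on a measurable space X and let T : L¹(X,m) → L¹(X,m) be a linear operator which is positivity-preserving (u ≥ 0 a.e. implies Tu ≥ 0 a.e.) and mass-preserving (∫_X Tu dm = ∫_X u dm for all u ∈ L¹(X,m)). Let f ∈ L∞(X,m), set A = {f > 0}, and let K ≥ 0 be such that ∫_A T(χ_{X∖A}) dm ≤ K/2 and ∫_{X∖A} T(χ_A) dm ≤ K/2. Then ∫_X √(T(f⁺)·T(f⁻)) dm ≤ √(K·‖f‖_{L∞}·‖f‖_{L¹}), where f⁺ = max(f,0) and f⁻ = max(−f,0). -/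
open MeasureTheory Filter


lemma sqrtCS {X : Type*} [MeasurableSpace X] {ν : Measure X} {u v : X → ℝ}
    (hu : Integrable u ν) (hv : Integrable v ν)
    (hu0 : 0 ≤ᵐ[ν] u) (hv0 : 0 ≤ᵐ[ν] v) :
    ∫ x, Real.sqrt (u x * v x) ∂ν ≤
      Real.sqrt (∫ x, u x ∂ν) * Real.sqrt (∫ x, v x ∂ν) := by
  have h2 : (2:ℝ).HolderConjugate 2 := by constructor <;> norm_num
  have hmu : MemLp (fun x => Real.sqrt (u x)) (ENNReal.ofReal 2) ν := by
    rw [show ENNReal.ofReal 2 = 2 by norm_num]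
    rw [memLp_two_iff_integrable_sq (Real.continuous_sqrt.comp_aestronglyMeasurable hu.aestronglyMeasurable)]
    refine hu.congr ?_
    filter_upwards [hu0] with x hx
    simp [Real.sq_sqrt hx]
  have hmv : MemLp (fun x => Real.sqrt (v x)) (ENNReal.ofReal 2) ν := by
    rw [show ENNReal.ofReal 2 = 2 by norm_num]
    rw [memLp_two_iff_integrable_sq (Real.continuous_sqrt.comp_aestronglyMeasurable hv.aestronglyMeasurable)]
    refine hv.congr ?_
    filter_upwards [hv0] with x hx
    simp [Real.sq_sqrt hx]
  have := integral_mul_le_Lp_mul_Lq_of_nonneg h2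
    (Eventually.of_forall fun x => Real.sqrt_nonneg (u x))
    (Eventually.of_forall fun x => Real.sqrt_nonneg (v x)) hmu hmv
  have hl : ∫ x, Real.sqrt (u x * v x) ∂ν = ∫ x, Real.sqrt (u x) * Real.sqrt (v x) ∂ν := by
    refine integral_congr_ae ?_
    filter_upwards [hu0] with x hx
    exact Real.sqrt_mul hx _
  have h1 : ∫ x, Real.sqrt (u x) ^ (2:ℝ) ∂ν = ∫ x, u x ∂ν := by
    refine integral_congr_ae ?_
    filter_upwards [hu0] with x hx
    rw [Real.rpow_two, Real.sq_sqrt hx]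
  have h1' : ∫ x, Real.sqrt (v x) ^ (2:ℝ) ∂ν = ∫ x, v x ∂ν := by
    refine integral_congr_ae ?_
    filter_upwards [hv0] with x hx
    rw [Real.rpow_two, Real.sq_sqrt hx]
  rw [hl]
  calc ∫ x, Real.sqrt (u x) * Real.sqrt (v x) ∂ν
      ≤ (∫ x, Real.sqrt (u x) ^ (2:ℝ) ∂ν) ^ (1/2:ℝ) *
        (∫ x, Real.sqrt (v x) ^ (2:ℝ) ∂ν) ^ (1/2:ℝ) := this
    _ = Real.sqrt (∫ x, u x ∂ν) * Real.sqrt (∫ x, v x ∂ν) := by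
        rw [h1, h1', Real.sqrt_eq_rpow, Real.sqrt_eq_rpow]

lemma sqrt_add_sqrt_le {a b : ℝ} (ha : 0 ≤ a) (hb : 0 ≤ b) :
    Real.sqrt a + Real.sqrt b ≤ Real.sqrt (2 * (a + b)) := by
  rw [show Real.sqrt a + Real.sqrt b = Real.sqrt ((Real.sqrt a + Real.sqrt b)^2) from
    (Real.sqrt_sq (by positivity)).symm]
  apply Real.sqrt_le_sqrt
  nlinarith [Real.sq_sqrt ha, Real.sq_sqrt hb, Real.sqrt_nonneg a, Real.sqrt_nonneg b,
    sq_nonneg (Real.sqrt a - Real.sqrt b)]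

lemma sqrt_mul_le_half {a b : ℝ} (ha : 0 ≤ a) (hb : 0 ≤ b) :
    Real.sqrt (a * b) ≤ (a + b) / 2 := by
  rw [show (a + b) / 2 = Real.sqrt (((a + b) / 2)^2) from (Real.sqrt_sq (by positivity)).symm]
  exact Real.sqrt_le_sqrt (by nlinarith [sq_nonneg (a - b)])

/-- inequality (eq:per_Linfty_funct) of Lemma th:per.
Let `μ` be a finite measure and `T : L¹ → L¹` a linear, positivity-preserving and
mass-preserving operator. Let `f ∈ L∞`, `A = {f > 0}`, and let `K ≥ 0` satisfy
`∫_A T(χ_{X∖A}) dμ ≤ K/2` and `∫_{X∖A} T(χ_A) dμ ≤ K/2`. Then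
`∫ √(T(f⁺)·T(f⁻)) dμ ≤ √(K·‖f‖_∞·‖f‖_₁)`. -/
theorem stmt7 {X : Type*} [MeasurableSpace X] (μ : Measure X) [IsFiniteMeasure μ]
    (T : Lp ℝ 1 μ →ₗ[ℝ] Lp ℝ 1 μ)
    (hTpos : ∀ u : Lp ℝ 1 μ, (0 : X → ℝ) ≤ᵐ[μ] ⇑u → (0 : X → ℝ) ≤ᵐ[μ] ⇑(T u))
    (hTmass : ∀ u : Lp ℝ 1 μ, ∫ x, (T u) x ∂μ = ∫ x, u x ∂μ)
    (f : X → ℝ) (hfm : MemLp f ⊤ μ)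
    (hfp : Integrable (fun x => max (f x) 0) μ)
    (hfn : Integrable (fun x => max (-f x) 0) μ)
    (hχA : Integrable (({x | 0 < f x}).indicator (fun _ => (1 : ℝ))) μ)
    (hχAc : Integrable ((({x | 0 < f x})ᶜ).indicator (fun _ => (1 : ℝ))) μ)
    (K : ℝ) (hK0 : 0 ≤ K)
    (h1 : ∫ x in {x | 0 < f x}, (T (hχAc.toL1 _)) x ∂μ ≤ K / 2)
    (h2 : ∫ x in ({x | 0 < f x})ᶜ, (T (hχA.toL1 _)) x ∂μ ≤ K / 2) :
    ∫ x, Real.sqrt ((T (hfp.toL1 _)) x * (T (hfn.toL1 _)) x) ∂μ ≤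
      Real.sqrt (K * (eLpNorm f ⊤ μ).toReal * ∫ x, |f x| ∂μ) := by
  set A := {x | 0 < f x} with hA
  set C := (eLpNorm f ⊤ μ).toReal with hC
  have hC0 : 0 ≤ C := ENNReal.toReal_nonneg
  -- monotonicity of T
  have hmono : ∀ u v : Lp ℝ 1 μ, ⇑u ≤ᵐ[μ] ⇑v → ⇑(T u) ≤ᵐ[μ] ⇑(T v) := by
    intro u v huv
    have h0 : (0 : X → ℝ) ≤ᵐ[μ] ⇑(v - u) := by
      filter_upwards [Lp.coeFn_sub v u, huv] with x hx h
      rw [hx]; simpa using h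
    have hpos := hTpos _ h0
    have hsub : ⇑(T (v - u)) =ᵐ[μ] ⇑(T v) - ⇑(T u) := by
      rw [map_sub]; exact Lp.coeFn_sub _ _
    filter_upwards [hpos, hsub] with x hx1 hx2
    have : (0:ℝ) ≤ (T v) x - (T u) x := by
      have := hx1; rw [hx2] at this; simpa using this
    linarith
  -- essential sup bound
  have hfbd : ∀ᵐ x ∂μ, |f x| ≤ C := by
    have h := ae_le_eLpNormEssSup (f := f) (μ := μ)
    have htop : eLpNormEssSup f μ ≠ ⊤ := by
      rw [← eLpNorm_exponent_top]; exact hfm.2.ne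
    filter_upwards [h] with x hx
    have := ENNReal.toReal_mono htop hx
    simpa [hC, eLpNorm_exponent_top] using this
  -- pointwise domination
  have hple : (fun x => max (f x) 0) ≤ᵐ[μ] fun x => C * A.indicator (fun _ => (1:ℝ)) x := by
    filter_upwards [hfbd] with x hx
    by_cases h : x ∈ A
    · rw [Set.indicator_of_mem h, mul_one, max_eq_left (le_of_lt h)]
      exact (le_abs_self _).trans hx
    · rw [Set.indicator_of_notMem h, mul_zero, max_eq_right (not_lt.1 h)]
  have hnle : (fun x => max (-f x) 0) ≤ᵐ[μ] fun x => C * Aᶜ.indicator (fun _ => (1:ℝ)) x := by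
    filter_upwards [hfbd] with x hx
    by_cases h : x ∈ A
    · rw [Set.indicator_of_notMem (by simpa using h), mul_zero,
        max_eq_right (by simpa using le_of_lt h)]
    · rw [Set.indicator_of_mem (by simpa using h), mul_one,
        max_eq_left (by simpa using not_lt.1 h)]
      exact (neg_le_abs _).trans hx
  -- nonnegativity
  have hu0 : (0 : X → ℝ) ≤ᵐ[μ] ⇑(T (hfp.toL1 _)) := by
    refine hTpos _ ?_
    filter_upwards [hfp.coeFn_toL1] with x hx
    rw [hx]; exact le_max_right _ _
  have hv0 : (0 : X → ℝ) ≤ᵐ[μ] ⇑(T (hfn.toL1 _)) := by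
    refine hTpos _ ?_
    filter_upwards [hfn.coeFn_toL1] with x hx
    rw [hx]; exact le_max_right _ _
  have hgA0 : (0 : X → ℝ) ≤ᵐ[μ] ⇑(T (hχA.toL1 _)) := by
    refine hTpos _ ?_
    filter_upwards [hχA.coeFn_toL1] with x hx
    rw [hx]; exact Set.indicator_nonneg (fun _ _ => zero_le_one) x
  have hgAc0 : (0 : X → ℝ) ≤ᵐ[μ] ⇑(T (hχAc.toL1 _)) := by
    refine hTpos _ ?_
    filter_upwards [hχAc.coeFn_toL1] with x hx
    rw [hx]; exact Set.indicator_nonneg (fun _ _ => zero_le_one) x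
  -- domination after applying T
  have key1 : ⇑(T (hfp.toL1 _)) ≤ᵐ[μ] fun x => C * (T (hχA.toL1 _)) x := by
    have hle : ⇑(hfp.toL1 _) ≤ᵐ[μ] ⇑(C • hχA.toL1 _) := by
      filter_upwards [hfp.coeFn_toL1, hχA.coeFn_toL1,
        Lp.coeFn_smul C (hχA.toL1 _), hple] with x hx1 hx2 hx3 hx4
      rw [hx1, hx3, Pi.smul_apply, hx2, smul_eq_mul]
      exact hx4
    have h := hmono _ _ hle
    rw [LinearMap.map_smul] at h
    filter_upwards [h, Lp.coeFn_smul C (T (hχA.toL1 _))] with x hx1 hx2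
    rw [hx2] at hx1; simpa using hx1
  have key2 : ⇑(T (hfn.toL1 _)) ≤ᵐ[μ] fun x => C * (T (hχAc.toL1 _)) x := by
    have hle : ⇑(hfn.toL1 _) ≤ᵐ[μ] ⇑(C • hχAc.toL1 _) := by
      filter_upwards [hfn.coeFn_toL1, hχAc.coeFn_toL1,
        Lp.coeFn_smul C (hχAc.toL1 _), hnle] with x hx1 hx2 hx3 hx4
      rw [hx1, hx3, Pi.smul_apply, hx2, smul_eq_mul]
      exact hx4
    have h := hmono _ _ hle
    rw [LinearMap.map_smul] at h
    filter_upwards [h, Lp.coeFn_smul C (T (hχAc.toL1 _))] with x hx1 hx2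
    rw [hx2] at hx1; simpa using hx1
  -- integrability
  have hui : Integrable (⇑(T (hfp.toL1 _))) μ := L1.integrable_coeFn _
  have hvi : Integrable (⇑(T (hfn.toL1 _))) μ := L1.integrable_coeFn _
  have hgAi : Integrable (⇑(T (hχA.toL1 _))) μ := L1.integrable_coeFn _
  have hgAci : Integrable (⇑(T (hχAc.toL1 _))) μ := L1.integrable_coeFn _
  -- mass preservation
  set Ip := ∫ x, max (f x) 0 ∂μ with hIp
  set In := ∫ x, max (-f x) 0 ∂μ with hIn
  have hIp0 : 0 ≤ Ip := integral_nonneg fun x => le_max_right _ _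
  have hIn0 : 0 ≤ In := integral_nonneg fun x => le_max_right _ _
  have hmassu : ∫ x, (T (hfp.toL1 _)) x ∂μ = Ip := by
    rw [hTmass]; exact integral_congr_ae hfp.coeFn_toL1
  have hmassv : ∫ x, (T (hfn.toL1 _)) x ∂μ = In := by
    rw [hTmass]; exact integral_congr_ae hfn.coeFn_toL1
  -- set integral bounds
  have hbA : ∫ x in A, (T (hfp.toL1 _)) x ∂μ ≤ Ip :=
    (setIntegral_le_integral hui hu0).trans hmassu.le
  have hbAc : ∫ x in Aᶜ, (T (hfn.toL1 _)) x ∂μ ≤ In :=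
    (setIntegral_le_integral hvi hv0).trans hmassv.le
  have hvA : ∫ x in A, (T (hfn.toL1 _)) x ∂μ ≤ C * (K / 2) := by
    calc ∫ x in A, (T (hfn.toL1 _)) x ∂μ
        ≤ ∫ x in A, C * (T (hχAc.toL1 _)) x ∂μ :=
          setIntegral_mono_ae hvi.restrict (hgAci.const_mul C).restrict key2
      _ = C * ∫ x in A, (T (hχAc.toL1 _)) x ∂μ := integral_const_mul C _
      _ ≤ C * (K / 2) := mul_le_mul_of_nonneg_left h1 hC0
  have huAc : ∫ x in Aᶜ, (T (hfp.toL1 _)) x ∂μ ≤ C * (K / 2) := by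
    calc ∫ x in Aᶜ, (T (hfp.toL1 _)) x ∂μ
        ≤ ∫ x in Aᶜ, C * (T (hχA.toL1 _)) x ∂μ :=
          setIntegral_mono_ae hui.restrict (hgAi.const_mul C).restrict key1
      _ = C * ∫ x in Aᶜ, (T (hχA.toL1 _)) x ∂μ := integral_const_mul C _
      _ ≤ C * (K / 2) := mul_le_mul_of_nonneg_left h2 hC0
  -- set integrals are nonneg
  have hsAu : 0 ≤ ∫ x in A, (T (hfp.toL1 _)) x ∂μ :=
    integral_nonneg_of_ae (ae_restrict_of_ae hu0)
  have hsAv : 0 ≤ ∫ x in A, (T (hfn.toL1 _)) x ∂μ :=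
    integral_nonneg_of_ae (ae_restrict_of_ae hv0)
  have hsAcu : 0 ≤ ∫ x in Aᶜ, (T (hfp.toL1 _)) x ∂μ :=
    integral_nonneg_of_ae (ae_restrict_of_ae hu0)
  have hsAcv : 0 ≤ ∫ x in Aᶜ, (T (hfn.toL1 _)) x ∂μ :=
    integral_nonneg_of_ae (ae_restrict_of_ae hv0)
  -- null measurability of A
  have hANM : NullMeasurableSet A μ := by
    have hg : AEMeasurable (A.indicator (fun _ => (1:ℝ))) μ :=
      hχA.aestronglyMeasurable.aemeasurable
    have hAe : A = (A.indicator (fun _ => (1:ℝ))) ⁻¹' {1} := by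
      ext x
      by_cases h : x ∈ A <;>
        simp [Set.indicator_of_mem, Set.indicator_of_notMem, h]
    rw [hAe]
    exact hg.nullMeasurable (measurableSet_singleton 1)
  -- integrability of the sqrt integrand
  have hsm : AEStronglyMeasurable
      (fun x => Real.sqrt ((T (hfp.toL1 _)) x * (T (hfn.toL1 _)) x)) μ :=
    Real.continuous_sqrt.comp_aestronglyMeasurable
      (hui.aestronglyMeasurable.mul hvi.aestronglyMeasurable)
  have hint : Integrable
      (fun x => Real.sqrt ((T (hfp.toL1 _)) x * (T (hfn.toL1 _)) x)) μ := by
    refine Integrable.mono' ((hui.add hvi).div_const 2) hsm ?_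
    filter_upwards [hu0, hv0] with x hx1 hx2
    rw [Real.norm_eq_abs, abs_of_nonneg (Real.sqrt_nonneg _)]
    exact sqrt_mul_le_half hx1 hx2
  -- split the integral
  have hsplit :
      ∫ x, Real.sqrt ((T (hfp.toL1 _)) x * (T (hfn.toL1 _)) x) ∂μ =
        (∫ x in A, Real.sqrt ((T (hfp.toL1 _)) x * (T (hfn.toL1 _)) x) ∂μ) +
        ∫ x in Aᶜ, Real.sqrt ((T (hfp.toL1 _)) x * (T (hfn.toL1 _)) x) ∂μ :=
    (integral_add_compl₀ hANM hint).symm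
  -- Cauchy-Schwarz on each piece
  have hCSA : ∫ x in A, Real.sqrt ((T (hfp.toL1 _)) x * (T (hfn.toL1 _)) x) ∂μ ≤
      Real.sqrt Ip * Real.sqrt (C * (K / 2)) := by
    calc ∫ x in A, Real.sqrt ((T (hfp.toL1 _)) x * (T (hfn.toL1 _)) x) ∂μ
        ≤ Real.sqrt (∫ x in A, (T (hfp.toL1 _)) x ∂μ) *
          Real.sqrt (∫ x in A, (T (hfn.toL1 _)) x ∂μ) :=
          sqrtCS hui.restrict hvi.restrict (ae_restrict_of_ae hu0) (ae_restrict_of_ae hv0)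
      _ ≤ Real.sqrt Ip * Real.sqrt (C * (K / 2)) :=
          mul_le_mul (Real.sqrt_le_sqrt hbA) (Real.sqrt_le_sqrt hvA)
            (Real.sqrt_nonneg _) (Real.sqrt_nonneg _)
  have hCSAc : ∫ x in Aᶜ, Real.sqrt ((T (hfp.toL1 _)) x * (T (hfn.toL1 _)) x) ∂μ ≤
      Real.sqrt (C * (K / 2)) * Real.sqrt In := by
    calc ∫ x in Aᶜ, Real.sqrt ((T (hfp.toL1 _)) x * (T (hfn.toL1 _)) x) ∂μ
        ≤ Real.sqrt (∫ x in Aᶜ, (T (hfp.toL1 _)) x ∂μ) *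
          Real.sqrt (∫ x in Aᶜ, (T (hfn.toL1 _)) x ∂μ) :=
          sqrtCS hui.restrict hvi.restrict (ae_restrict_of_ae hu0) (ae_restrict_of_ae hv0)
      _ ≤ Real.sqrt (C * (K / 2)) * Real.sqrt In :=
          mul_le_mul (Real.sqrt_le_sqrt huAc) (Real.sqrt_le_sqrt hbAc)
            (Real.sqrt_nonneg _) (Real.sqrt_nonneg _)
  -- |f| = f⁺ + f⁻
  have habs : ∫ x, |f x| ∂μ = Ip + In := by
    rw [hIp, hIn, ← integral_add hfp hfn]
    refine integral_congr_ae (Eventually.of_forall fun x => ?_)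
    rcases le_total (f x) 0 with h | h
    · simp [abs_of_nonpos h, max_eq_right h, max_eq_left (neg_nonneg.2 h)]
    · simp [abs_of_nonneg h, max_eq_left h, max_eq_right (neg_nonpos.2 h)]
  -- final arithmetic
  have hD0 : 0 ≤ C * (K / 2) := by positivity
  rw [hsplit, habs]
  calc (∫ x in A, Real.sqrt ((T (hfp.toL1 _)) x * (T (hfn.toL1 _)) x) ∂μ) +
        ∫ x in Aᶜ, Real.sqrt ((T (hfp.toL1 _)) x * (T (hfn.toL1 _)) x) ∂μ
      ≤ Real.sqrt Ip * Real.sqrt (C * (K / 2)) + Real.sqrt (C * (K / 2)) * Real.sqrt In :=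
        add_le_add hCSA hCSAc
    _ = Real.sqrt (Ip * (C * (K / 2))) + Real.sqrt (In * (C * (K / 2))) := by
        rw [← Real.sqrt_mul hIp0, ← Real.sqrt_mul hD0, mul_comm (C * (K / 2)) In]
    _ ≤ Real.sqrt (2 * (Ip * (C * (K / 2)) + In * (C * (K / 2)))) :=
        sqrt_add_sqrt_le (by positivity) (by positivity)
    _ = Real.sqrt (K * C * (Ip + In)) := by congr 1; ring
end

section
/- Let (X,d) be a metric space and m a finite Borel measure on X. Let T : L¹(X,m) → L¹(X,m) be a linear operator which is positivity-preserving, mass-preserving (∫ Tu dm = ∫ u dm for all u ∈ L¹), and satisfies the maximum principle (for every constant β ∈ ℝ, u ≤ β a.e. implies Tu ≤ β a.e.). Let c > 0 and let S : L∞(X,m) → L∞(X,m) satisfy ∫_X g·Tu dm = ∫_X (Sg)·u dm for all u ∈ L¹(X,m), g ∈ L∞(X,m), with Sg admitting a Lipschitz representative of Lipschitz constant at most c·‖g‖_{L∞} for every g. Let f ∈ L∞(X,m) and let K ≥ 0 satisfy ‖χ_{{f>0}} − T(χ_{{f>0}})‖_{L¹} ≤ K. Then for every real number W such that ∫_X h·f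 dm ≤ W for every bounded 1-Lipschitz h : X → ℝ, one has ‖f‖_{L¹} ≤ c·W + 2·√(K·‖f‖_{L∞}·‖f‖_{L¹}). -/
open MeasureTheory Filter Set
open scoped ENNReal NNReal

private lemma clamp_lipschitz (N a b : ℝ) :
    |max (-N) (min N a) - max (-N) (min N b)| ≤ |a - b| := by
  rw [max_comm (-N) (min N a), max_comm (-N) (min N b)]
  refine (abs_max_sub_max_le_abs _ _ _).trans ?_
  have h := abs_min_sub_min_le_max N a N b
  simpa [max_eq_right (abs_nonneg (a - b))] using h

private lemma memTop_ae_bound {X : Type*} [MeasurableSpace X] {μ : Measure X}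
    {f : X → ℝ} (hf : MemLp f ⊤ μ) :
    ∀ᵐ x ∂μ, |f x| ≤ (eLpNorm f ⊤ μ).toReal := by
  have hne : eLpNormEssSup f μ ≠ ⊤ := by
    have h := hf.2
    rw [eLpNorm_exponent_top] at h
    exact h.ne
  filter_upwards [ae_le_eLpNormEssSup (f := f) (μ := μ)] with x hx
  rw [eLpNorm_exponent_top]
  have h2 : |f x| = ((‖f x‖₊ : ℝ≥0∞)).toReal := by
    simp [Real.norm_eq_abs]
  rw [h2]
  exact ENNReal.toReal_mono hne hx

private lemma lpTop_ae_bound {X : Type*} [MeasurableSpace X] {μ : Measure X}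
    (g : Lp ℝ ⊤ μ) : ∀ᵐ x ∂μ, |g x| ≤ ‖g‖ := by
  rw [Lp.norm_def]
  exact memTop_ae_bound (Lp.memLp g)

set_option maxHeartbeats 1000000 in
/-- Theorem th:impl_indet, implicit indeterminacy estimate.
Let `μ` be a finite Borel measure on a metric space, `T : L¹ → L¹` linear,
positivity-preserving, mass-preserving and satisfying the maximum principle, and
`S : L∞ → L∞` its adjoint with the `L∞`-to-Lipschitz property with constant `c`.
Let `f ∈ L∞` and `K ≥ 0` with `‖χ_{{f>0}} − T(χ_{{f>0}})‖_{L¹} ≤ K`. Then for every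
upper bound `W` of `∫ h·f dμ` over bounded `1`-Lipschitz `h`, one has
`‖f‖_{L¹} ≤ c·W + 2·√(K·‖f‖_∞·‖f‖_₁)`. -/
theorem stmt8 {X : Type*} [MetricSpace X] [MeasurableSpace X] [BorelSpace X]
    (μ : Measure X) [IsFiniteMeasure μ]
    (T : Lp ℝ 1 μ →ₗ[ℝ] Lp ℝ 1 μ)
    (hTpos : ∀ u : Lp ℝ 1 μ, (0 : X → ℝ) ≤ᵐ[μ] ⇑u → (0 : X → ℝ) ≤ᵐ[μ] ⇑(T u))
    (hTmass : ∀ u : Lp ℝ 1 μ, ∫ x, (T u) x ∂μ = ∫ x, u x ∂μ)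
    (hTmax : ∀ (β : ℝ) (u : Lp ℝ 1 μ),
      ⇑u ≤ᵐ[μ] (fun _ => β) → ⇑(T u) ≤ᵐ[μ] (fun _ => β))
    (c : ℝ) (hc : 0 < c)
    (S : Lp ℝ ⊤ μ → Lp ℝ ⊤ μ)
    (hadj : ∀ (u : Lp ℝ 1 μ) (g : Lp ℝ ⊤ μ),
      ∫ x, g x * (T u) x ∂μ = ∫ x, (S g) x * u x ∂μ)
    (hSlip : ∀ g : Lp ℝ ⊤ μ, ∃ h : X → ℝ,
      (∀ x y, |h x - h y| ≤ c * ‖g‖ * dist x y) ∧ ⇑(S g) =ᵐ[μ] h)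
    (f : X → ℝ) (hfm : MemLp f ⊤ μ) (hf1 : Integrable f μ)
    (hχA : Integrable (({x | 0 < f x}).indicator (fun _ => (1 : ℝ))) μ)
    (K : ℝ) (hK0 : 0 ≤ K)
    (hK : ∫ x, |({x | 0 < f x}).indicator (fun _ => (1 : ℝ)) x - (T (hχA.toL1 _)) x| ∂μ ≤ K)
    (W : ℝ)
    (hW : ∀ h : X → ℝ, (∃ Cb : ℝ, ∀ x, |h x| ≤ Cb) →
      (∀ x y, |h x - h y| ≤ dist x y) → ∫ x, h x * f x ∂μ ≤ W) :
    ∫ x, |f x| ∂μ ≤ c * W +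
      2 * Real.sqrt (K * (eLpNorm f ⊤ μ).toReal * ∫ x, |f x| ∂μ) := by
  classical
  set A : Set X := {x | 0 < f x} with hAdef
  set χ : X → ℝ := A.indicator (fun _ => (1 : ℝ)) with hχdef
  set M : ℝ := (eLpNorm f ⊤ μ).toReal with hMdef
  have hχ01 : ∀ x, χ x = 1 ∨ χ x = 0 := by
    intro x
    by_cases hx : x ∈ A
    · left; simp [hχdef, indicator_of_mem hx]
    · right; simp [hχdef, indicator_of_notMem hx]
  have hχ_nonneg : ∀ x, 0 ≤ χ x := fun x => by rcases hχ01 x with h | h <;> rw [h] <;> norm_num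
  have hχ_le_one : ∀ x, χ x ≤ 1 := fun x => by rcases hχ01 x with h | h <;> rw [h] <;> norm_num
  have hχ_pos : ∀ x, 0 < f x → χ x = 1 := fun x hx => by
    simp [hχdef, indicator_of_mem (show x ∈ A from hx)]
  have hχ_npos : ∀ x, ¬ 0 < f x → χ x = 0 := fun x hx => by
    simp [hχdef, indicator_of_notMem (show x ∉ A from hx)]
  have hMae : ∀ᵐ x ∂μ, |f x| ≤ M := memTop_ae_bound hfm
  have hM_nn : (0 : ℝ) ≤ M := ENNReal.toReal_nonneg
  -- W is nonnegative and f has zero mean.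
  have hW0 : (0 : ℝ) ≤ W := by
    have h := hW (fun _ => 0) ⟨0, fun x => by simp⟩ (fun x y => by simp [dist_nonneg])
    simpa using h
  have hIf : ∫ x, f x ∂μ = 0 := by
    by_contra hne
    have h := hW (fun _ => (W + 1) / ∫ x, f x ∂μ) ⟨|(W + 1) / ∫ x, f x ∂μ|, fun x => le_refl _⟩
      (fun x y => by simp [dist_nonneg])
    rw [integral_const_mul, div_mul_cancel₀ _ hne] at h
    linarith
  -- L¹ elements
  set χL : Lp ℝ 1 μ := hχA.toL1 _ with hχLdef
  set fL : Lp ℝ 1 μ := hf1.toL1 f with hfLdef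
  have hu1 : Integrable (fun _ : X => (1 : ℝ)) μ := integrable_const 1
  set u1 : Lp ℝ 1 μ := hu1.toL1 _ with hu1def
  have hfLc : ⇑fL =ᵐ[μ] f := hf1.coeFn_toL1
  have hχLc : ⇑χL =ᵐ[μ] χ := hχA.coeFn_toL1
  have hu1c : ⇑u1 =ᵐ[μ] fun _ => (1 : ℝ) := hu1.coeFn_toL1
  -- T of the constant one function is one.
  have hTu1_int : Integrable ⇑(T u1) μ := L1.integrable_coeFn _
  have hT1 : ⇑(T u1) =ᵐ[μ] fun _ => (1 : ℝ) := by
    have hTu1_le : ⇑(T u1) ≤ᵐ[μ] fun _ => (1 : ℝ) := hTmax 1 u1 hu1c.le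
    have hnn : (0 : X → ℝ) ≤ᵐ[μ] fun x => 1 - (T u1) x := by
      filter_upwards [hTu1_le] with x hx
      simp only [Pi.zero_apply]
      linarith
    have hint : Integrable (fun x => 1 - (T u1) x) μ := (integrable_const 1).sub hTu1_int
    have hz : ∫ x, (1 - (T u1) x) ∂μ = 0 := by
      rw [integral_sub (integrable_const 1) hTu1_int, hTmass, integral_congr_ae hu1c, sub_self]
    have h0 := (integral_eq_zero_iff_of_nonneg_ae hnn hint).1 hz
    filter_upwards [h0] with x hx
    have hx' : 1 - (T u1) x = 0 := hx
    show (T u1) x = (1 : ℝ)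
    linarith
  -- Basic facts about T χ.
  have hTχ_int : Integrable ⇑(T χL) μ := L1.integrable_coeFn _
  have hTχ_nn : (0 : X → ℝ) ≤ᵐ[μ] ⇑(T χL) := by
    refine hTpos χL ?_
    filter_upwards [hχLc] with x hx
    simp only [Pi.zero_apply, hx]
    exact hχ_nonneg x
  have hTχ_le1 : ⇑(T χL) ≤ᵐ[μ] fun _ => (1 : ℝ) := by
    refine hTmax 1 χL ?_
    filter_upwards [hχLc] with x hx
    rw [hx]
    exact hχ_le_one x
  have hTχ_mass : ∫ x, (T χL) x ∂μ = ∫ x, χ x ∂μ := by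
    rw [hTmass]; exact integral_congr_ae hχLc
  -- L∞ elements
  have hχtop : MemLp χ ⊤ μ := by
    refine memLp_top_of_bound hχA.1 1 (Eventually.of_forall fun x => ?_)
    rw [Real.norm_eq_abs, abs_of_nonneg (hχ_nonneg x)]
    exact hχ_le_one x
  set χi : Lp ℝ ⊤ μ := hχtop.toLp χ with hχidef
  have hχic : ⇑χi =ᵐ[μ] χ := hχtop.coeFn_toLp
  set g : X → ℝ := fun x => 2 * χ x - 1 with hgdef
  have hgbd : ∀ x, |g x| ≤ 1 := fun x => by
    rcases hχ01 x with h | h <;> simp [hgdef, h] <;> norm_num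
  have hgm : AEStronglyMeasurable g μ :=
    (hχA.1.const_mul 2).sub aestronglyMeasurable_const
  have hgtop : MemLp g ⊤ μ := by
    refine memLp_top_of_bound hgm 1 (Eventually.of_forall fun x => ?_)
    rw [Real.norm_eq_abs]; exact hgbd x
  set gi : Lp ℝ ⊤ μ := hgtop.toLp g with hgidef
  have hgic : ⇑gi =ᵐ[μ] g := hgtop.coeFn_toLp
  have hginorm : ‖gi‖ ≤ 1 := by
    rw [hgidef, Lp.norm_toLp]
    have h1 : eLpNorm g ⊤ μ ≤ 1 := by
      rw [eLpNorm_exponent_top]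
      refine (eLpNormEssSup_le_of_ae_bound (C := 1)
        (Eventually.of_forall fun x => by rw [Real.norm_eq_abs]; exact hgbd x)).trans ?_
      simp
    calc (eLpNorm g ⊤ μ).toReal ≤ (1 : ℝ≥0∞).toReal := ENNReal.toReal_mono (by norm_num) h1
      _ = 1 := by simp
  -- Integrability facts
  have hSχ_int : Integrable ⇑(S χi) μ := (Lp.memLp (S χi)).integrable le_top
  have hSg_int : Integrable ⇑(S gi) μ := (Lp.memLp (S gi)).integrable le_top
  have hTfL_int : Integrable ⇑(T fL) μ := L1.integrable_coeFn _
  have habsf_int : Integrable (fun x => |f x|) μ := hf1.abs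
  have hχbd_ae : ∀ᵐ x ∂μ, ‖χ x‖ ≤ 1 := Eventually.of_forall fun x => by
    rw [Real.norm_eq_abs, abs_of_nonneg (hχ_nonneg x)]; exact hχ_le_one x
  have hχT_int : Integrable (fun x => χ x * (T fL) x) μ := hTfL_int.bdd_mul hχA.1 hχbd_ae
  have hχTχ_int : Integrable (fun x => χ x * (T χL) x) μ := hTχ_int.bdd_mul hχA.1 hχbd_ae
  have hχf_int : Integrable (fun x => χ x * f x) μ := hf1.bdd_mul hχA.1 hχbd_ae
  -- Pairing identity with indicators of measurable sets
  have key_pair : ∀ E : Set X, MeasurableSet E →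
      ∃ uE : Lp ℝ 1 μ, (⇑uE =ᵐ[μ] E.indicator (fun _ => (1 : ℝ))) ∧
        ∫ x in E, (S χi) x ∂μ = ∫ x, χi x * (T uE) x ∂μ := by
    intro E hE
    have hIE : Integrable (E.indicator fun _ => (1 : ℝ)) μ := (integrable_const 1).indicator hE
    refine ⟨hIE.toL1 _, hIE.coeFn_toL1, ?_⟩
    rw [hadj]
    rw [← integral_indicator hE]
    refine integral_congr_ae ?_
    filter_upwards [hIE.coeFn_toL1] with x hx
    rw [hx]
    by_cases hxE : x ∈ E <;> simp [indicator_of_mem, indicator_of_notMem, hxE]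
  -- S χ is between 0 and 1 a.e.
  have hSχ_nn : (0 : X → ℝ) ≤ᵐ[μ] ⇑(S χi) := by
    refine ae_nonneg_of_forall_setIntegral_nonneg hSχ_int ?_
    intro E hE _
    obtain ⟨uE, huEc, heq⟩ := key_pair E hE
    rw [heq]
    refine integral_nonneg_of_ae ?_
    have hTuE := hTpos uE (by
      filter_upwards [huEc] with x hx
      simp only [Pi.zero_apply, hx]
      exact indicator_nonneg (fun _ _ => zero_le_one) x)
    filter_upwards [hTuE, hχic] with x h1 h2
    rw [h2]
    exact mul_nonneg (hχ_nonneg x) h1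
  have hSχ_le1 : ⇑(S χi) ≤ᵐ[μ] fun _ => (1 : ℝ) := by
    have h : (0 : X → ℝ) ≤ᵐ[μ] fun x => 1 - (S χi) x := by
      refine ae_nonneg_of_forall_setIntegral_nonneg ((integrable_const 1).sub hSχ_int) ?_
      intro E hE _
      obtain ⟨uE, huEc, heq⟩ := key_pair E hE
      have hTuE_nn : (0 : X → ℝ) ≤ᵐ[μ] ⇑(T uE) := hTpos uE (by
        filter_upwards [huEc] with x hx
        simp only [Pi.zero_apply, hx]
        exact indicator_nonneg (fun _ _ => zero_le_one) x)
      have hTuE_int : Integrable ⇑(T uE) μ := L1.integrable_coeFn _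
      have hb : ∫ x, χi x * (T uE) x ∂μ ≤ ∫ x, (T uE) x ∂μ := by
        refine integral_mono_ae (hTuE_int.bdd_mul (c := 1) (Lp.aestronglyMeasurable _) ?_) hTuE_int ?_
        · filter_upwards [hχic] with x hx
          rw [hx, Real.norm_eq_abs, abs_of_nonneg (hχ_nonneg x)]
          exact hχ_le_one x
        · filter_upwards [hχic, hTuE_nn] with x h1 h2
          rw [h1]
          exact mul_le_of_le_one_left h2 (hχ_le_one x)
      have hmassE : ∫ x, (T uE) x ∂μ = (μ E).toReal := by
        rw [hTmass, integral_congr_ae huEc]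
        rw [integral_indicator_const _ hE]
        simp [measureReal_def]
      rw [integral_sub (integrable_const 1).integrableOn hSχ_int.integrableOn]
      rw [heq]
      have hconst : ∫ _ in E, (1 : ℝ) ∂μ = (μ E).toReal := by simp [measureReal_def]
      rw [hconst]
      linarith [hb, hmassE.le, hmassE.ge]
    filter_upwards [h] with x hx
    have hx' : (0 : ℝ) ≤ 1 - (S χi) x := hx
    show (S χi) x ≤ (1 : ℝ)
    linarith
  have hSχbd : ∀ᵐ x ∂μ, ‖(S χi) x‖ ≤ 1 := by
    filter_upwards [hSχ_nn, hSχ_le1] with x h1 h2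
    have h1' : (0 : ℝ) ≤ (S χi) x := h1
    rw [Real.norm_eq_abs, abs_of_nonneg h1']
    exact h2
  have hSχf_int : Integrable (fun x => (S χi) x * f x) μ :=
    hf1.bdd_mul (Lp.aestronglyMeasurable _) hSχbd
  -- the Lipschitz pairing bound
  have hSgf : ∫ x, (S gi) x * f x ∂μ ≤ c * W := by
    obtain ⟨h0, hlip, hSgc⟩ := hSlip gi
    set N : ℝ := ‖S gi‖ with hNdef
    have hN0 : (0 : ℝ) ≤ N := norm_nonneg _
    have hSgbd : ∀ᵐ x ∂μ, |(S gi) x| ≤ N := lpTop_ae_bound _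
    set h' : X → ℝ := fun x => max (-N) (min N (h0 x)) with hh'def
    have hh'bd : ∀ x, |h' x| ≤ N := fun x => by
      rw [abs_le]
      constructor
      · exact le_max_left _ _
      · exact max_le (le_trans (neg_nonpos.2 hN0) hN0) (min_le_left _ _)
    have hh'lip : ∀ x y, |h' x - h' y| ≤ c * dist x y := by
      intro x y
      refine (clamp_lipschitz N (h0 x) (h0 y)).trans ?_
      refine (hlip x y).trans ?_
      have hd : (0 : ℝ) ≤ dist x y := dist_nonneg
      nlinarith [mul_nonneg (mul_nonneg hc.le hd) (sub_nonneg.2 hginorm)]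
    have happ : ∫ x, (h' x / c) * f x ∂μ ≤ W := by
      refine hW _ ⟨N / c, fun x => ?_⟩ (fun x y => ?_)
      · rw [abs_div, abs_of_pos hc]
        gcongr
        exact hh'bd x
      · rw [div_sub_div_same, abs_div, abs_of_pos hc, div_le_iff₀ hc]
        calc |h' x - h' y| ≤ c * dist x y := hh'lip x y
          _ = dist x y * c := by ring
    have hh'eq : ⇑(S gi) =ᵐ[μ] h' := by
      filter_upwards [hSgc, hSgbd] with x h1 h2
      rw [h1] at h2
      rw [h1, hh'def]
      simp only
      rw [min_eq_right (abs_le.1 h2).2, max_eq_right (abs_le.1 h2).1]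
    have h1 : ∫ x, (S gi) x * f x ∂μ = ∫ x, h' x * f x ∂μ := by
      refine integral_congr_ae ?_
      filter_upwards [hh'eq] with x hx
      rw [hx]
    have h2 : ∫ x, h' x * f x ∂μ = c * ∫ x, (h' x / c) * f x ∂μ := by
      rw [← integral_const_mul]
      refine integral_congr_ae (Eventually.of_forall fun x => ?_)
      field_simp
    rw [h1, h2]
    exact mul_le_mul_of_nonneg_left happ hc.le
  -- adjoint identities
  have had1 : ∫ x, g x * (T fL) x ∂μ = ∫ x, (S gi) x * f x ∂μ := by
    calc ∫ x, g x * (T fL) x ∂μ = ∫ x, gi x * (T fL) x ∂μ :=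
          integral_congr_ae (by filter_upwards [hgic] with x hx; rw [hx])
      _ = ∫ x, (S gi) x * fL x ∂μ := hadj fL gi
      _ = ∫ x, (S gi) x * f x ∂μ :=
          integral_congr_ae (by filter_upwards [hfLc] with x hx; rw [hx])
  have had2 : ∫ x, χ x * (T fL) x ∂μ = ∫ x, (S χi) x * f x ∂μ := by
    calc ∫ x, χ x * (T fL) x ∂μ = ∫ x, χi x * (T fL) x ∂μ :=
          integral_congr_ae (by filter_upwards [hχic] with x hx; rw [hx])
      _ = ∫ x, (S χi) x * fL x ∂μ := hadj fL χi
      _ = ∫ x, (S χi) x * f x ∂μ :=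
          integral_congr_ae (by filter_upwards [hfLc] with x hx; rw [hx])
  have had3 : ∫ x, χ x * (T χL) x ∂μ = ∫ x, (S χi) x * χ x ∂μ := by
    calc ∫ x, χ x * (T χL) x ∂μ = ∫ x, χi x * (T χL) x ∂μ :=
          integral_congr_ae (by filter_upwards [hχic] with x hx; rw [hx])
      _ = ∫ x, (S χi) x * χL x ∂μ := hadj χL χi
      _ = ∫ x, (S χi) x * χ x ∂μ :=
          integral_congr_ae (by filter_upwards [hχLc] with x hx; rw [hx])
  have had4 : ∫ x, (S χi) x ∂μ = ∫ x, χ x ∂μ := by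
    have h := hadj u1 χi
    calc ∫ x, (S χi) x ∂μ = ∫ x, (S χi) x * u1 x ∂μ :=
          integral_congr_ae (by filter_upwards [hu1c] with x hx; rw [hx, mul_one])
      _ = ∫ x, χi x * (T u1) x ∂μ := h.symm
      _ = ∫ x, χ x ∂μ := integral_congr_ae (by
          filter_upwards [hχic, hT1] with x h1 h2
          rw [h1, h2, mul_one])
  -- main decomposition
  have hIfL : ∫ x, (T fL) x ∂μ = 0 := by
    rw [hTmass, integral_congr_ae hfLc]; exact hIf
  have habs : ∀ x, g x * f x = |f x| := by
    intro x
    by_cases hx : 0 < f x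
    · rw [hgdef]; simp only [hχ_pos x hx]; rw [abs_of_pos hx]; ring
    · rw [hgdef]; simp only [hχ_npos x hx]; rw [abs_of_nonpos (not_lt.1 hx)]; ring
  have e1 : ∫ x, g x * f x ∂μ = ∫ x, |f x| ∂μ :=
    integral_congr_ae (Eventually.of_forall fun x => habs x)
  have e1' : ∫ x, g x * f x ∂μ = 2 * ∫ x, χ x * f x ∂μ - ∫ x, f x ∂μ := by
    have h : ∫ x, g x * f x ∂μ = ∫ x, (2 * (χ x * f x) - f x) ∂μ :=
      integral_congr_ae (Eventually.of_forall fun x => by rw [hgdef]; ring)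
    rw [h, integral_sub (hχf_int.const_mul 2) hf1, integral_const_mul]
  have eL : ∫ x, |f x| ∂μ = 2 * ∫ x, χ x * f x ∂μ := by
    rw [← e1, e1', hIf, sub_zero]
  have e2 : ∫ x, g x * (T fL) x ∂μ = 2 * ∫ x, χ x * (T fL) x ∂μ := by
    have h : ∫ x, g x * (T fL) x ∂μ = ∫ x, (2 * (χ x * (T fL) x) - (T fL) x) ∂μ :=
      integral_congr_ae (Eventually.of_forall fun x => by rw [hgdef]; ring)
    rw [h, integral_sub (hχT_int.const_mul 2) hTfL_int, integral_const_mul, hIfL, sub_zero]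
  -- the weight w
  set w : X → ℝ := fun x => χ x * (1 - (S χi) x) + (1 - χ x) * (S χi) x with hwdef
  have hw_eq : ∀ x, (χ x - (S χi) x) * f x = w x * |f x| := by
    intro x
    by_cases hx : 0 < f x
    · rw [hwdef]; simp only [hχ_pos x hx]; rw [abs_of_pos hx]; ring
    · rw [hwdef]; simp only [hχ_npos x hx]; rw [abs_of_nonpos (not_lt.1 hx)]; ring
  have hw_nn : (0 : X → ℝ) ≤ᵐ[μ] w := by
    filter_upwards [hSχ_nn, hSχ_le1] with x h1 h2
    have h1' : (0 : ℝ) ≤ (S χi) x := h1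
    have h2' : (S χi) x ≤ 1 := h2
    simp only [Pi.zero_apply, hwdef]
    rcases hχ01 x with h | h <;> rw [h] <;> nlinarith
  have hw_le1 : w ≤ᵐ[μ] fun _ => (1 : ℝ) := by
    filter_upwards [hSχ_nn, hSχ_le1] with x h1 h2
    have h1' : (0 : ℝ) ≤ (S χi) x := h1
    have h2' : (S χi) x ≤ 1 := h2
    simp only [hwdef]
    rcases hχ01 x with h | h <;> rw [h] <;> nlinarith
  have hw_int : Integrable w μ := by
    have hm : AEStronglyMeasurable w μ := by
      refine AEStronglyMeasurable.add ?_ ?_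
      · exact hχA.1.mul (aestronglyMeasurable_const.sub (Lp.aestronglyMeasurable _))
      · exact (aestronglyMeasurable_const.sub hχA.1).mul (Lp.aestronglyMeasurable _)
    refine (memLp_top_of_bound hm 1 ?_).integrable le_top
    filter_upwards [hw_nn, hw_le1] with x h1 h2
    have h1' : (0 : ℝ) ≤ w x := h1
    rw [Real.norm_eq_abs, abs_of_nonneg h1']
    exact h2
  have hwbd : ∀ᵐ x ∂μ, ‖w x‖ ≤ 1 := by
    filter_upwards [hw_nn, hw_le1] with x h1 h2
    have h1' : (0 : ℝ) ≤ w x := h1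
    rw [Real.norm_eq_abs, abs_of_nonneg h1']
    exact h2
  have hwf_int : Integrable (fun x => w x * |f x|) μ := habsf_int.bdd_mul hw_int.1 hwbd
  -- ∫ w ≤ K
  have hSχχ_int : Integrable (fun x => χ x * (S χi) x) μ := hSχ_int.bdd_mul hχA.1 hχbd_ae
  have hw_split : ∫ x, w x ∂μ
      = ∫ x, χ x ∂μ + ∫ x, (S χi) x ∂μ - 2 * ∫ x, χ x * (S χi) x ∂μ := by
    have h : ∫ x, w x ∂μ = ∫ x, (χ x + (S χi) x - 2 * (χ x * (S χi) x)) ∂μ :=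
      integral_congr_ae (Eventually.of_forall fun x => by rw [hwdef]; ring)
    have iadd : Integrable (fun x => χ x + (S χi) x) μ := hχA.add hSχ_int
    have imul2 : Integrable (fun x => 2 * (χ x * (S χi) x)) μ := hSχχ_int.const_mul 2
    rw [h, integral_sub iadd imul2, integral_add hχA hSχ_int, integral_const_mul]
  have hcomm : ∫ x, χ x * (S χi) x ∂μ = ∫ x, χ x * (T χL) x ∂μ := by
    rw [had3]
    exact integral_congr_ae (Eventually.of_forall fun x => mul_comm _ _)
  have hw_val : ∫ x, w x ∂μ = 2 * (∫ x, χ x ∂μ - ∫ x, χ x * (T χL) x ∂μ) := by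
    rw [hw_split, had4, hcomm]; ring
  have hv0 : ∫ x, (χ x - (T χL) x) ∂μ = 0 := by
    rw [integral_sub hχA hTχ_int, hTχ_mass, sub_self]
  have hvK : ∫ x, |χ x - (T χL) x| ∂μ ≤ K := hK
  have hv_int : Integrable (fun x => χ x - (T χL) x) μ := hχA.sub hTχ_int
  have habsv_int : Integrable (fun x => |χ x - (T χL) x|) μ := (hχA.sub hTχ_int).abs
  have hχv_int : Integrable (fun x => χ x * (χ x - (T χL) x)) μ :=
    (hχA.sub hTχ_int).bdd_mul hχA.1 hχbd_ae
  have h2χv : ∀ᵐ x ∂μ, 2 * (χ x * (χ x - (T χL) x))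
      ≤ |χ x - (T χL) x| + (χ x - (T χL) x) := by
    filter_upwards [hTχ_nn, hTχ_le1] with x h1 h2
    have h1' : (0 : ℝ) ≤ (T χL) x := h1
    have h2' : (T χL) x ≤ 1 := h2
    rcases hχ01 x with h | h
    · rw [h]
      rw [abs_of_nonneg (by linarith : (0 : ℝ) ≤ 1 - (T χL) x)]
      linarith
    · rw [h, zero_sub, abs_neg, abs_of_nonneg h1']
      linarith
  have hwK : ∫ x, w x ∂μ ≤ K := by
    have h1 : ∫ x, 2 * (χ x * (χ x - (T χL) x)) ∂μ
        ≤ ∫ x, (|χ x - (T χL) x| + (χ x - (T χL) x)) ∂μ :=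
      integral_mono_ae (hχv_int.const_mul 2) (habsv_int.add hv_int) h2χv
    rw [integral_const_mul, integral_add habsv_int hv_int, hv0, add_zero] at h1
    have h2 : ∫ x, χ x * (χ x - (T χL) x) ∂μ
        = ∫ x, χ x ∂μ - ∫ x, χ x * (T χL) x ∂μ := by
      have h3 : ∫ x, χ x * (χ x - (T χL) x) ∂μ = ∫ x, (χ x - χ x * (T χL) x) ∂μ := by
        refine integral_congr_ae (Eventually.of_forall fun x => ?_)
        rcases hχ01 x with h | h <;> simp only [h] <;> ring
      rw [h3, integral_sub hχA hχTχ_int]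
    rw [h2] at h1
    rw [hw_val]
    linarith
  -- core inequality via AM-GM
  have hL_nn : (0 : ℝ) ≤ ∫ x, |f x| ∂μ :=
    integral_nonneg_of_ae (Eventually.of_forall fun x => abs_nonneg _)
  have hx_nn : (0 : ℝ) ≤ ∫ x, w x * |f x| ∂μ := by
    refine integral_nonneg_of_ae ?_
    filter_upwards [hw_nn] with x h1
    exact mul_nonneg h1 (abs_nonneg _)
  have hIw_nn : (0 : ℝ) ≤ ∫ x, w x ∂μ := integral_nonneg_of_ae hw_nn
  have hf2_int : Integrable (fun x => f x ^ 2) μ := by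
    refine (habsf_int.const_mul M).mono' ?_ ?_
    · have := hf1.1.mul hf1.1
      convert this using 1; funext x; simp [sq]
    · filter_upwards [hMae] with x hx
      show ‖f x ^ 2‖ ≤ M * |f x|
      rw [Real.norm_eq_abs, abs_of_nonneg (sq_nonneg _)]
      calc f x ^ 2 = |f x| * |f x| := by rw [← sq_abs]; ring
        _ ≤ M * |f x| := mul_le_mul_of_nonneg_right hx (abs_nonneg _)
  have hf2_le : ∫ x, f x ^ 2 ∂μ ≤ M * ∫ x, |f x| ∂μ := by
    rw [← integral_const_mul]
    refine integral_mono_ae hf2_int (habsf_int.const_mul M) ?_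
    filter_upwards [hMae] with x hx
    show f x ^ 2 ≤ M * |f x|
    calc f x ^ 2 = |f x| * |f x| := by rw [← sq_abs]; ring
      _ ≤ M * |f x| := mul_le_mul_of_nonneg_right hx (abs_nonneg _)
  have key : ∀ a : ℝ, 0 < a →
      2 * a * ∫ x, w x * |f x| ∂μ ≤ a ^ 2 * K + M * ∫ x, |f x| ∂μ := by
    intro a ha
    have hpt : ∀ᵐ x ∂μ, 2 * a * (w x * |f x|) ≤ a ^ 2 * w x + f x ^ 2 := by
      filter_upwards [hw_nn, hw_le1] with x h1 h2
      have h1' : (0 : ℝ) ≤ w x := h1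
      have h2' : w x ≤ 1 := h2
      nlinarith [sq_nonneg (a * w x - |f x|), sq_abs (f x),
        mul_nonneg (sq_nonneg a) (mul_nonneg h1' (sub_nonneg.2 h2'))]
    have i1 : Integrable (fun x => 2 * a * (w x * |f x|)) μ := hwf_int.const_mul _
    have i2 : Integrable (fun x => a ^ 2 * w x) μ := hw_int.const_mul _
    have hint : ∫ x, (2 * a * (w x * |f x|)) ∂μ ≤ ∫ x, (a ^ 2 * w x + f x ^ 2) ∂μ :=
      integral_mono_ae i1 (i2.add hf2_int) hpt
    rw [integral_const_mul, integral_add i2 hf2_int,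
      integral_const_mul] at hint
    have h3 : a ^ 2 * ∫ x, w x ∂μ ≤ a ^ 2 * K := by
      exact mul_le_mul_of_nonneg_left hwK (sq_nonneg a)
    linarith [hf2_le]
  have hxle : ∫ x, w x * |f x| ∂μ ≤ Real.sqrt (K * M * ∫ x, |f x| ∂μ) := by
    rcases eq_or_lt_of_le hK0 with hKz | hKpos
    · have hIw : ∫ x, w x ∂μ = 0 := le_antisymm (hKz ▸ hwK) hIw_nn
      have hw0 : w =ᵐ[μ] 0 := (integral_eq_zero_iff_of_nonneg_ae hw_nn hw_int).1 hIw
      have hz : ∫ x, w x * |f x| ∂μ = 0 := by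
        have h : (fun x => w x * |f x|) =ᵐ[μ] fun _ => (0 : ℝ) := by
          filter_upwards [hw0] with x hx
          have hx' : w x = 0 := hx
          rw [hx', zero_mul]
        rw [integral_congr_ae h, integral_zero]
      rw [hz]
      exact Real.sqrt_nonneg _
    · rcases eq_or_lt_of_le hx_nn with hXz | hXpos
      · rw [← hXz]
        exact Real.sqrt_nonneg _
      · have hKne : K ≠ 0 := ne_of_gt hKpos
        set Y : ℝ := ∫ x, w x * |f x| ∂μ with hYdef
        have hk := key (Y / K) (div_pos hXpos hKpos)
        have e3 : (Y / K) ^ 2 * K = Y ^ 2 / K := by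
          rw [div_pow, pow_two K, ← div_div, div_mul_cancel₀ _ hKne]
        have e4 : 2 * (Y / K) * Y = 2 * (Y ^ 2 / K) := by
          ring
        rw [e3, e4] at hk
        have h5 : Y ^ 2 / K ≤ M * ∫ x, |f x| ∂μ := by linarith
        have h6 : Y ^ 2 ≤ (M * ∫ x, |f x| ∂μ) * K := (div_le_iff₀ hKpos).1 h5
        have h7 : Y ^ 2 ≤ K * M * ∫ x, |f x| ∂μ := by
          calc Y ^ 2 ≤ (M * ∫ x, |f x| ∂μ) * K := h6
            _ = K * M * ∫ x, |f x| ∂μ := by ring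
        calc Y = Real.sqrt (Y ^ 2) := (Real.sqrt_sq hXpos.le).symm
          _ ≤ Real.sqrt (K * M * ∫ x, |f x| ∂μ) := Real.sqrt_le_sqrt h7
  -- final assembly
  have h5 : ∫ x, (χ x - (S χi) x) * f x ∂μ = ∫ x, w x * |f x| ∂μ :=
    integral_congr_ae (Eventually.of_forall fun x => hw_eq x)
  have h6 : ∫ x, (χ x - (S χi) x) * f x ∂μ
      = ∫ x, χ x * f x ∂μ - ∫ x, (S χi) x * f x ∂μ := by
    rw [← integral_sub hχf_int hSχf_int]
    exact integral_congr_ae (Eventually.of_forall fun x => by ring)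
  have hdecomp : ∫ x, |f x| ∂μ
      = ∫ x, (S gi) x * f x ∂μ + 2 * ∫ x, w x * |f x| ∂μ := by
    have h7 := had1
    have h8 := e2
    have h9 := had2
    linarith [eL, h5, h6]
  have hsq := Real.sqrt_nonneg (K * M * ∫ x, |f x| ∂μ)
  linarith [hSgf, hxle, hdecomp]
end

section
/- Let (X,d) be a metric space and m a finite Borel measure on X. Let T : L¹(X,m) → L¹(X,m) be a linear operator which is positivity-preserving, mass-preserving (∫ Tu dm = ∫ u dm for all u ∈ L¹), and satisfies the maximum principle (for every constant β ∈ ℝ, u ≤ β a.e. implies Tu ≤ β a.e.). Let f ∈ L∞(X,m), λ > 0 and t > 0 be such that Tf = e^{−λt}·f m-a.e., and let K ≥ 0 satisfy ‖χ_{{f>0}} − T(χ_{{f>0}})‖_{L¹} ≤ K. Then K·‖f‖_{L∞} ≥ ((1 − e^{−λt})²/4)·‖f‖_{L¹}. -/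
open MeasureTheory Filter

set_option maxHeartbeats 1000000 in
/-- inequality (eq:per_nodal_set) of Theorem th:per nodal set.
Let `μ` be a finite Borel measure on a metric space and `T : L¹ → L¹` linear,
positivity-preserving, mass-preserving and satisfying the maximum principle. Let
`f ∈ L∞`, `λ, t > 0` with `Tf = e^{−λt}·f` a.e., and `K ≥ 0` with
`‖χ_{{f>0}} − T(χ_{{f>0}})‖_{L¹} ≤ K`. Then
`K·‖f‖_∞ ≥ ((1 − e^{−λt})²/4)·‖f‖_₁`. -/
theorem stmt9 {X : Type*} [MetricSpace X] [MeasurableSpace X] [BorelSpace X]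
    (μ : Measure X) [IsFiniteMeasure μ]
    (T : Lp ℝ 1 μ →ₗ[ℝ] Lp ℝ 1 μ)
    (hTpos : ∀ u : Lp ℝ 1 μ, (0 : X → ℝ) ≤ᵐ[μ] ⇑u → (0 : X → ℝ) ≤ᵐ[μ] ⇑(T u))
    (hTmass : ∀ u : Lp ℝ 1 μ, ∫ x, (T u) x ∂μ = ∫ x, u x ∂μ)
    (hTmax : ∀ (β : ℝ) (u : Lp ℝ 1 μ),
      ⇑u ≤ᵐ[μ] (fun _ => β) → ⇑(T u) ≤ᵐ[μ] (fun _ => β))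
    (f : X → ℝ) (hfm : MemLp f ⊤ μ) (hf1 : Integrable f μ)
    (lam t : ℝ) (hlam : 0 < lam) (ht : 0 < t)
    (heig : ⇑(T (hf1.toL1 f)) =ᵐ[μ] fun x => Real.exp (-(lam * t)) * f x)
    (hχA : Integrable (({x | 0 < f x}).indicator (fun _ => (1 : ℝ))) μ)
    (K : ℝ) (hK0 : 0 ≤ K)
    (hK : ∫ x, |({x | 0 < f x}).indicator (fun _ => (1 : ℝ)) x - (T (hχA.toL1 _)) x| ∂μ ≤ K) :
    ((1 - Real.exp (-(lam * t))) ^ 2 / 4) * ∫ x, |f x| ∂μ ≤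
      K * (eLpNorm f ⊤ μ).toReal := by
  set p := Real.exp (-(lam * t)) with hp_def
  have hp0 : 0 < p := Real.exp_pos _
  have hp1 : p < 1 := by
    rw [hp_def, Real.exp_lt_one_iff]; nlinarith
  set M := (eLpNorm f ⊤ μ).toReal with hM_def
  have hM0 : 0 ≤ M := ENNReal.toReal_nonneg
  have hMae : ∀ᵐ x ∂μ, |f x| ≤ M := by
    filter_upwards [ae_le_eLpNormEssSup (f := f) (μ := μ)] with x hx
    have h2 : (ENNReal.ofNNReal ‖f x‖₊).toReal ≤ (eLpNormEssSup f μ).toReal :=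
      ENNReal.toReal_mono (by rw [← eLpNorm_exponent_top]; exact hfm.2.ne) hx
    simpa [hM_def, eLpNorm_exponent_top, Real.norm_eq_abs] using h2
  set g : X → ℝ := ({x | 0 < f x}).indicator (fun _ => (1 : ℝ)) with hg_def
  set fm' : X → ℝ := fun x => max (-f x) 0 with hfm'_def
  have hFmInt : Integrable fm' μ := by
    have h := hf1.neg.pos_part
    simpa [hfm'_def] using h
  -- L1 elements
  set χL : Lp ℝ 1 μ := hχA.toL1 _ with hχL_def
  set F : Lp ℝ 1 μ := hf1.toL1 f with hF_def
  set Fm : Lp ℝ 1 μ := hFmInt.toL1 fm' with hFm_def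
  set Fp : Lp ℝ 1 μ := F + Fm with hFp_def
  set oneL : Lp ℝ 1 μ := (integrable_const (1 : ℝ)).toL1 _ with hone_def
  -- coercion facts
  have hχ_coe : ⇑χL =ᵐ[μ] g := hχA.coeFn_toL1
  have hF_coe : ⇑F =ᵐ[μ] f := hf1.coeFn_toL1
  have hFm_coe : ⇑Fm =ᵐ[μ] fm' := hFmInt.coeFn_toL1
  have hone_coe : ⇑oneL =ᵐ[μ] fun _ => (1 : ℝ) := (integrable_const 1).coeFn_toL1
  have hFp_coe : ⇑Fp =ᵐ[μ] fun x => f x + fm' x := by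
    filter_upwards [Lp.coeFn_add F Fm, hF_coe, hFm_coe] with x h1 h2 h3
    simp only [hFp_def, h1, Pi.add_apply, h2, h3]
  -- basic positivity/maximum facts
  have hTχ0 : (0 : X → ℝ) ≤ᵐ[μ] ⇑(T χL) := by
    refine hTpos χL ?_
    filter_upwards [hχ_coe] with x h1
    rw [h1]
    exact Set.indicator_nonneg (fun _ _ => zero_le_one) x
  have hTχ1 : ⇑(T χL) ≤ᵐ[μ] fun _ => (1 : ℝ) := by
    refine hTmax 1 χL ?_
    filter_upwards [hχ_coe] with x h1
    rw [h1]
    exact Set.indicator_le_self' (fun _ _ => zero_le_one) x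
  have hTone : ⇑(T oneL) ≤ᵐ[μ] fun _ => (1 : ℝ) := by
    refine hTmax 1 oneL ?_
    filter_upwards [hone_coe] with x h1
    rw [h1]
  have hTFm0 : (0 : X → ℝ) ≤ᵐ[μ] ⇑(T Fm) := by
    refine hTpos Fm ?_
    filter_upwards [hFm_coe] with x h1
    rw [h1]
    exact le_max_right _ _
  -- T Fp ≤ M · T χ  a.e.
  have h4coe : ⇑(T (M • χL - Fp)) =ᵐ[μ] fun x => M * (T χL) x - (T Fp) x := by
    have he : T (M • χL - Fp) = M • (T χL) - T Fp := by
      rw [map_sub, LinearMap.map_smul]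
    rw [he]
    filter_upwards [Lp.coeFn_sub (M • T χL) (T Fp), Lp.coeFn_smul M (T χL)] with x h1 h2
    simp only [h1, Pi.sub_apply, h2, Pi.smul_apply, smul_eq_mul]
  have h4pos : (0 : X → ℝ) ≤ᵐ[μ] ⇑(T (M • χL - Fp)) := by
    refine hTpos _ ?_
    have hc : ⇑(M • χL - Fp) =ᵐ[μ] fun x => M * g x - (f x + fm' x) := by
      filter_upwards [Lp.coeFn_sub (M • χL) Fp, Lp.coeFn_smul M χL, hχ_coe, hFp_coe]
        with x h1 h2 h3 h4
      simp only [h1, Pi.sub_apply, h2, Pi.smul_apply, smul_eq_mul, h3, h4]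
    filter_upwards [hc, hMae] with x h1 h2
    rw [h1]
    by_cases hfx : 0 < f x
    · have hgx : g x = 1 := by simp only [hg_def]; exact Set.indicator_of_mem (show x ∈ {x | 0 < f x} from hfx) (fun _ => (1:ℝ))
      have hfmx : fm' x = 0 := max_eq_right (by linarith)
      rw [hgx, hfmx]
      have : f x ≤ M := le_trans (le_abs_self _) h2
      simp only [Pi.zero_apply]
      linarith
    · have hgx : g x = 0 := by simp only [hg_def]; exact Set.indicator_of_notMem (show x ∉ {x | 0 < f x} from hfx) (fun _ => (1:ℝ))
      have hfmx : fm' x = -f x := max_eq_left (by push_neg at hfx; linarith)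
      rw [hgx, hfmx]
      simp
  have hTFp_le : ⇑(T Fp) ≤ᵐ[μ] fun x => M * (T χL) x := by
    filter_upwards [h4pos, h4coe] with x h1 h2
    rw [h2] at h1
    simp only [Pi.zero_apply] at h1
    linarith
  -- T Fm ≤ M (1 - T χ)  a.e.
  have h5coe : ⇑(T (M • oneL - M • χL - Fm)) =ᵐ[μ]
      fun x => M * (T oneL) x - M * (T χL) x - (T Fm) x := by
    have he : T (M • oneL - M • χL - Fm) = M • (T oneL) - M • (T χL) - T Fm := by
      rw [map_sub, map_sub, LinearMap.map_smul, LinearMap.map_smul]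
    rw [he]
    filter_upwards [Lp.coeFn_sub (M • T oneL - M • T χL) (T Fm),
      Lp.coeFn_sub (M • T oneL) (M • T χL), Lp.coeFn_smul M (T oneL),
      Lp.coeFn_smul M (T χL)] with x h1 h2 h3 h4
    simp only [h1, Pi.sub_apply, h2, h3, h4, Pi.smul_apply, smul_eq_mul]
  have h5pos : (0 : X → ℝ) ≤ᵐ[μ] ⇑(T (M • oneL - M • χL - Fm)) := by
    refine hTpos _ ?_
    have hc : ⇑(M • oneL - M • χL - Fm) =ᵐ[μ] fun x => M * 1 - M * g x - fm' x := by
      filter_upwards [Lp.coeFn_sub (M • oneL - M • χL) Fm, Lp.coeFn_sub (M • oneL) (M • χL),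
        Lp.coeFn_smul M oneL, Lp.coeFn_smul M χL, hone_coe, hχ_coe, hFm_coe]
        with x h1 h2 h3 h4 h5 h6 h7
      simp only [h1, Pi.sub_apply, h2, h3, h4, Pi.smul_apply, smul_eq_mul, h5, h6, h7]
    filter_upwards [hc, hMae] with x h1 h2
    rw [h1]
    by_cases hfx : 0 < f x
    · have hgx : g x = 1 := by simp only [hg_def]; exact Set.indicator_of_mem (show x ∈ {x | 0 < f x} from hfx) (fun _ => (1:ℝ))
      have hfmx : fm' x = 0 := max_eq_right (by linarith)
      rw [hgx, hfmx]
      simp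
    · have hgx : g x = 0 := by simp only [hg_def]; exact Set.indicator_of_notMem (show x ∉ {x | 0 < f x} from hfx) (fun _ => (1:ℝ))
      have hfmx : fm' x = -f x := max_eq_left (by push_neg at hfx; linarith)
      have : -f x ≤ M := le_trans (neg_le_abs _) h2
      rw [hgx, hfmx]
      simp only [Pi.zero_apply]
      linarith
  have hTFm_le : ⇑(T Fm) ≤ᵐ[μ] fun x => M * (1 - (T χL) x) := by
    filter_upwards [h5pos, h5coe, hTone] with x h1 h2 h3
    rw [h2] at h1
    simp only [Pi.zero_apply] at h1
    have h4 : M * (T oneL) x ≤ M * 1 := mul_le_mul_of_nonneg_left h3 hM0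
    nlinarith
  -- T Fp = p f + T Fm  a.e.
  have h6 : ⇑(T Fp) =ᵐ[μ] fun x => p * f x + (T Fm) x := by
    have he : T Fp = T F + T Fm := by rw [hFp_def, map_add]
    rw [he]
    filter_upwards [Lp.coeFn_add (T F) (T Fm), heig] with x h1 h2
    simp only [h1, Pi.add_apply, h2]
  -- key pointwise inequality
  have key : ⇑(T Fp) ≤ᵐ[μ] fun x => p * (f x + fm' x) + M * |g x - (T χL) x| := by
    filter_upwards [hTχ0, hTχ1, hTFm0, hTFm_le, hTFp_le, h6] with x h1 h2 h3 h4 h5 h7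
    simp only [Pi.zero_apply] at h1 h3
    by_cases hfx : 0 < f x
    · have hgx : g x = 1 := by simp only [hg_def]; exact Set.indicator_of_mem (show x ∈ {x | 0 < f x} from hfx) (fun _ => (1:ℝ))
      have hfmx : fm' x = 0 := max_eq_right (by linarith)
      have habs : |g x - (T χL) x| = 1 - (T χL) x := by
        rw [hgx]; exact abs_of_nonneg (by have := h2; linarith)
      rw [h7, habs, hfmx]
      linarith
    · have hgx : g x = 0 := by simp only [hg_def]; exact Set.indicator_of_notMem (show x ∉ {x | 0 < f x} from hfx) (fun _ => (1:ℝ))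
      have hfmx : fm' x = -f x := max_eq_left (by push_neg at hfx; linarith)
      have habs : |g x - (T χL) x| = (T χL) x := by
        rw [hgx, zero_sub, abs_neg]; exact abs_of_nonneg h1
      rw [habs, hfmx]
      have h9 : p * (f x + -f x) = 0 := by ring
      linarith
  -- integrate
  have hTχInt : Integrable (⇑(T χL)) μ := L1.integrable_coeFn (T χL)
  have haddInt : Integrable (fun x => f x + fm' x) μ := hf1.add hFmInt
  have hpInt : Integrable (fun x => p * (f x + fm' x)) μ := haddInt.const_mul p
  have hAbsInt : Integrable (fun x => |g x - (T χL) x|) μ := (hχA.sub hTχInt).abs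
  have hRHSInt : Integrable (fun x => p * (f x + fm' x) + M * |g x - (T χL) x|) μ :=
    hpInt.add (hAbsInt.const_mul M)
  have hint : ∫ x, (T Fp) x ∂μ ≤ ∫ x, (p * (f x + fm' x) + M * |g x - (T χL) x|) ∂μ :=
    integral_mono_ae (L1.integrable_coeFn (T Fp)) hRHSInt key
  have hmassFp : ∫ x, (T Fp) x ∂μ = ∫ x, (f x + fm' x) ∂μ :=
    (hTmass Fp).trans (integral_congr_ae hFp_coe)
  -- ∫ f = 0
  have hintf0 : ∫ x, f x ∂μ = 0 := by
    have h1 : ∫ x, (T F) x ∂μ = ∫ x, f x ∂μ :=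
      (hTmass F).trans (integral_congr_ae hF_coe)
    have h2 : ∫ x, (T F) x ∂μ = p * ∫ x, f x ∂μ := by
      rw [integral_congr_ae heig, integral_const_mul]
    have h3 : (1 - p) * ∫ x, f x ∂μ = 0 := by linarith
    have h4 : (1 - p) ≠ 0 := by linarith
    exact (mul_eq_zero.mp h3).resolve_left h4
  set N := ∫ x, fm' x ∂μ with hN_def
  have hN0 : 0 ≤ N := integral_nonneg (fun x => le_max_right _ _)
  have hsum : ∫ x, (f x + fm' x) ∂μ = N := by
    rw [integral_add hf1 hFmInt, hintf0, zero_add]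
  have hsplit : ∫ x, (p * (f x + fm' x) + M * |g x - (T χL) x|) ∂μ
      = p * N + M * ∫ x, |g x - (T χL) x| ∂μ := by
    rw [integral_add hpInt (hAbsInt.const_mul M),
      integral_const_mul, integral_const_mul, hsum]
  have hmain : (1 - p) * N ≤ M * K := by
    have h1 : N ≤ p * N + M * ∫ x, |g x - (T χL) x| ∂μ := by
      rw [← hsplit, ← hsum, ← hmassFp]; exact hint
    have h2 : M * ∫ x, |g x - (T χL) x| ∂μ ≤ M * K :=
      mul_le_mul_of_nonneg_left hK hM0
    linarith
  -- ‖f‖₁ = 2 N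
  have habsf : ∫ x, |f x| ∂μ = 2 * N := by
    have h1 : ∀ x, |f x| = f x + 2 * fm' x := by
      intro x
      rcases le_or_gt 0 (f x) with h | h
      · rw [abs_of_nonneg h, hfm'_def]
        simp only [max_eq_right (by linarith : -f x ≤ 0)]
        ring
      · rw [abs_of_neg h, hfm'_def]
        simp only [max_eq_left (by linarith : (0:ℝ) ≤ -f x)]
        ring
    calc ∫ x, |f x| ∂μ = ∫ x, (f x + 2 * fm' x) ∂μ := by
          exact integral_congr_ae (Eventually.of_forall h1)
      _ = ∫ x, f x ∂μ + ∫ x, 2 * fm' x ∂μ := integral_add hf1 (hFmInt.const_mul 2)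
      _ = 2 * N := by rw [hintf0, integral_const_mul, zero_add]
  rw [habsf]
  nlinarith [hmain, mul_nonneg hM0 hK0, sq_nonneg (1 - p), mul_nonneg (mul_nonneg hM0 hK0) (sub_nonneg.mpr hp1.le)]
end

section
/- Let (X,d) be a metric space and m a Borel measure on X. Let c > 0, let T : L¹(X,m) → L¹(X,m) be a linear operator, and let S : L∞(X,m) → L∞(X,m) satisfy ∫_X g·Tu dm = ∫_X (Sg)·u dm for all u ∈ L¹(X,m), g ∈ L∞(X,m), with Sg admitting a Lipschitz representative of Lipschitz constant at most c·‖g‖_{L∞} for every g. Let f ∈ L¹(X,m), λ > 0 and t > 0 be such that Tf = e^{−λt}·f m-a.e. Then for every real number W such that ∫_X h·f dm ≤ W for every bounded 1-Lipschitz h : X → ℝ, one has W ≥ (e^{−λt}/c)·‖f‖_{L¹}. -/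
open MeasureTheory Filter

/-- inequality (eq:W1_eigen_impl) of Theorem th:per nodal set.
Let `μ` be a Borel measure on a metric space, `T : L¹ → L¹` linear, and `S : L∞ → L∞`
its adjoint with the `L∞`-to-Lipschitz property with constant `c`. Let `f ∈ L¹`,
`λ, t > 0` with `Tf = e^{−λt}·f` a.e. Then for every upper bound `W` of `∫ h·f dμ` over
bounded `1`-Lipschitz `h`, one has `W ≥ (e^{−λt}/c)·‖f‖_{L¹}`. -/
theorem stmt10 {X : Type*} [MetricSpace X] [MeasurableSpace X] [BorelSpace X]
    (μ : Measure X) (c : ℝ) (hc : 0 < c)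
    (T : Lp ℝ 1 μ →ₗ[ℝ] Lp ℝ 1 μ)
    (S : Lp ℝ ⊤ μ → Lp ℝ ⊤ μ)
    (hadj : ∀ (u : Lp ℝ 1 μ) (g : Lp ℝ ⊤ μ),
      ∫ x, g x * (T u) x ∂μ = ∫ x, (S g) x * u x ∂μ)
    (hSlip : ∀ g : Lp ℝ ⊤ μ, ∃ h : X → ℝ,
      (∀ x y, |h x - h y| ≤ c * ‖g‖ * dist x y) ∧ ⇑(S g) =ᵐ[μ] h)
    (f : X → ℝ) (hf1 : Integrable f μ)
    (lam t : ℝ) (hlam : 0 < lam) (ht : 0 < t)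
    (heig : ⇑(T (hf1.toL1 f)) =ᵐ[μ] fun x => Real.exp (-(lam * t)) * f x)
    (W : ℝ)
    (hW : ∀ h : X → ℝ, (∃ Cb : ℝ, ∀ x, |h x| ≤ Cb) →
      (∀ x y, |h x - h y| ≤ dist x y) → ∫ x, h x * f x ∂μ ≤ W) :
    (Real.exp (-(lam * t)) / c) * ∫ x, |f x| ∂μ ≤ W := by
  classical
  set e := Real.exp (-(lam * t)) with he
  -- a strongly measurable representative of f
  obtain ⟨fm, hfm, hfme⟩ := hf1.aestronglyMeasurable
  -- the sign function of f
  set g0 : X → ℝ := fun x => if fm x < 0 then (-1 : ℝ) else if 0 < fm x then 1 else 0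
    with hg0def
  have hg0m : Measurable g0 := by
    apply Measurable.ite (measurableSet_lt hfm.measurable measurable_const) measurable_const
    exact Measurable.ite (measurableSet_lt measurable_const hfm.measurable) measurable_const
      measurable_const
  have hbd1 : ∀ x, ‖g0 x‖ ≤ 1 := by
    intro x
    simp only [hg0def, Real.norm_eq_abs]
    split_ifs <;> norm_num
  have hg0 : MemLp g0 ⊤ μ :=
    memLp_top_of_bound hg0m.aestronglyMeasurable 1 (Eventually.of_forall hbd1)
  set g : Lp ℝ ⊤ μ := hg0.toLp g0 with hgdef
  have hg_coe : ⇑g =ᵐ[μ] g0 := hg0.coeFn_toLp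
  have hgle : ‖g‖ ≤ 1 := by
    rw [hgdef, Lp.norm_toLp]
    have h1 : eLpNorm g0 ⊤ μ ≤ 1 := by
      rw [eLpNorm_exponent_top]
      simpa using eLpNormEssSup_le_of_ae_bound (μ := μ) (C := (1 : ℝ))
        (Eventually.of_forall hbd1)
    calc (eLpNorm g0 ⊤ μ).toReal ≤ ((1 : ENNReal)).toReal :=
          ENNReal.toReal_mono (by norm_num) h1
      _ = 1 := by simp
  obtain ⟨h, hlip, hae⟩ := hSlip g
  set M := ‖S g‖ with hMdef
  have hM0 : 0 ≤ M := norm_nonneg _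
  -- a.e. bound on S g
  have hfin : eLpNormEssSup (⇑(S g)) μ < ⊤ := by
    have := Lp.eLpNorm_lt_top (S g)
    rwa [eLpNorm_exponent_top] at this
  have hMb : ∀ᵐ x ∂μ, ‖(S g) x‖ ≤ M := by
    filter_upwards [ae_le_eLpNormEssSup (f := ⇑(S g)) (μ := μ)] with x hx
    rw [hMdef, Lp.norm_def, eLpNorm_exponent_top]
    calc ‖(S g) x‖ = ((‖(S g) x‖₊ : ENNReal)).toReal := by simp
      _ ≤ _ := ENNReal.toReal_mono hfin.ne hx
  have hhb : ∀ᵐ x ∂μ, |h x| ≤ M := by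
    filter_upwards [hae, hMb] with x hx1 hx2
    rw [← Real.norm_eq_abs, ← hx1]; exact hx2
  -- truncate h to make it bounded
  set k : X → ℝ := fun x => max (-M) (min M (h x)) with hkdef
  have hklip : ∀ x y, |k x - k y| ≤ c * ‖g‖ * dist x y := by
    intro x y
    calc |k x - k y| ≤ max |(-M) - (-M)| |min M (h x) - min M (h y)| :=
          abs_max_sub_max_le_max _ _ _ _
      _ ≤ max |(-M) - (-M)| (max |M - M| |h x - h y|) := by
          exact max_le_max le_rfl (abs_min_sub_min_le_max _ _ _ _)
      _ = |h x - h y| := by simp [abs_nonneg]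
      _ ≤ c * ‖g‖ * dist x y := hlip x y
  have hkbd : ∀ x, |k x| ≤ M := by
    intro x
    rw [abs_le]
    constructor
    · exact le_max_left _ _
    · exact max_le (by linarith) ((min_le_left _ _))
  have hkh : k =ᵐ[μ] h := by
    filter_upwards [hhb] with x hx
    rw [abs_le] at hx
    simp only [hkdef]
    rw [min_eq_right hx.2, max_eq_right hx.1]
  -- the rescaled 1-Lipschitz bounded function
  set k1 : X → ℝ := fun x => k x / c with hk1def
  have hk1bd : ∃ Cb : ℝ, ∀ x, |k1 x| ≤ Cb := by
    refine ⟨M / c, fun x => ?_⟩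
    simp only [hk1def, abs_div, abs_of_pos hc]
    gcongr
    exact hkbd x
  have hk1lip : ∀ x y, |k1 x - k1 y| ≤ dist x y := by
    intro x y
    have : |k1 x - k1 y| = |k x - k y| / c := by
      rw [hk1def]
      rw [div_sub_div_same, abs_div, abs_of_pos hc]
    rw [this, div_le_iff₀ hc]
    calc |k x - k y| ≤ c * ‖g‖ * dist x y := hklip x y
      _ ≤ c * 1 * dist x y := by
          apply mul_le_mul_of_nonneg_right _ dist_nonneg
          exact mul_le_mul_of_nonneg_left hgle hc.le
      _ = dist x y * c := by ring
  have hWk : ∫ x, k1 x * f x ∂μ ≤ W := hW k1 hk1bd hk1lip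
  -- now compute the integral
  have hfL1 : ⇑(hf1.toL1 f) =ᵐ[μ] f := hf1.coeFn_toL1
  have step1 : ∫ x, k1 x * f x ∂μ = (∫ x, k x * f x ∂μ) / c := by
    rw [← integral_div]
    apply integral_congr_ae
    filter_upwards with x
    simp only [hk1def]; ring
  have step2 : ∫ x, k x * f x ∂μ = ∫ x, (S g) x * f x ∂μ := by
    apply integral_congr_ae
    filter_upwards [hkh, hae] with x hx1 hx2
    rw [hx1, ← hx2]
  have step3 : ∫ x, (S g) x * f x ∂μ = ∫ x, (S g) x * (hf1.toL1 f) x ∂μ := by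
    apply integral_congr_ae
    filter_upwards [hfL1] with x hx
    rw [hx]
  have step4 : ∫ x, (S g) x * (hf1.toL1 f) x ∂μ = ∫ x, g x * (T (hf1.toL1 f)) x ∂μ :=
    (hadj (hf1.toL1 f) g).symm
  have step5 : ∫ x, g x * (T (hf1.toL1 f)) x ∂μ = e * ∫ x, g0 x * f x ∂μ := by
    rw [← integral_const_mul]
    apply integral_congr_ae
    filter_upwards [hg_coe, heig] with x hx1 hx2
    rw [hx1, hx2]; ring
  have step6 : ∫ x, g0 x * f x ∂μ = ∫ x, |f x| ∂μ := by
    apply integral_congr_ae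
    filter_upwards [hfme] with x hx
    simp only [hg0def]
    rcases lt_trichotomy (fm x) 0 with hneg | hzero | hpos
    · rw [if_pos hneg, ← hx] at *
      rw [abs_of_neg (hx ▸ hneg)] ; ring
    · rw [if_neg (by rw [hzero]; exact lt_irrefl 0), if_neg (by rw [hzero]; exact lt_irrefl 0)]
      rw [← hx] at hzero
      rw [hzero]; simp
    · rw [if_neg (by linarith), if_pos hpos]
      rw [abs_of_pos (hx ▸ hpos)]; ring
  have key : ∫ x, k1 x * f x ∂μ = (e / c) * ∫ x, |f x| ∂μ := by
    rw [step1, step2, step3, step4, step5, step6]; ring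
  rw [← key]
  exact hWk
end

section
/- Let (X,d) be a metric space and m a finite Borel measure on X. Let T : L¹(X,m) → L¹(X,m) be a linear operator which is positivity-preserving, mass-preserving (∫ Tu dm = ∫ u dm for all u ∈ L¹), satisfies the maximum principle (for every constant β ∈ ℝ, u ≤ β a.e. implies Tu ≤ β a.e.), and is ultracontractive with constant θ > 0, i.e. ‖Tu‖_{L∞} ≤ θ·‖u‖_{L¹} for all u ∈ L¹(X,m). Let f ∈ L∞(X,m) with ‖f‖_{L¹} > 0, λ > 0 and t > 0 be such that Tf = e^{−λt}·f m-a.e., and let K ≥ 0 satisfy ‖χ_{{f>0}} − T(χ_{{f>0}})‖_{L¹} ≤ K. Then K ≥ e^{−λt}(1 − e^{−λt})²/(4θ). -/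
open MeasureTheory Filter
open scoped ENNReal NNReal

lemma stmt11_arith {a θ J C K : ℝ} (ha0 : 0 < a) (ha1 : a < 1) (hθ : 0 < θ)
    (hJ0 : 0 < J) (hK0 : 0 ≤ K) (h1 : (1 - a) * J ≤ C * K) (h2 : a * C ≤ θ * (2 * J)) :
    a * (1 - a) ^ 2 / (4 * θ) ≤ K := by
  have hC : 0 < C := by
    by_contra h
    push_neg at h
    have h3 : C * K ≤ 0 := mul_nonpos_of_nonpos_of_nonneg h hK0
    have h4 : 0 < (1 - a) * J := mul_pos (by linarith) hJ0
    linarith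
  have h8 : C * (a * (1 - a)) ≤ C * (2 * θ * K) := by
    have h6 := mul_le_mul_of_nonneg_left h2 (by linarith : (0:ℝ) ≤ 1 - a)
    have h7 := mul_le_mul_of_nonneg_left h1 (by linarith : (0:ℝ) ≤ 2 * θ)
    nlinarith [h6, h7]
  have h5 : a * (1 - a) ≤ 2 * θ * K := (mul_le_mul_iff_right₀ hC).mp h8
  rw [div_le_iff₀ (by positivity)]
  nlinarith [mul_le_mul_of_nonneg_left h5 (show (0:ℝ) ≤ 1 - a by linarith),
    mul_nonneg hθ.le hK0]

/-- Corollary res:ultrac_nodal.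
Let `μ` be a finite Borel measure on a metric space and `T : L¹ → L¹` linear,
positivity-preserving, mass-preserving, satisfying the maximum principle, and
`θ`-ultracontractive (`‖Tu‖_∞ ≤ θ·‖u‖_₁`). Let `f ∈ L∞` with `‖f‖_₁ > 0`, `λ, t > 0`
with `Tf = e^{−λt}·f` a.e., and `K ≥ 0` with `‖χ_{{f>0}} − T(χ_{{f>0}})‖_{L¹} ≤ K`.
Then `K ≥ e^{−λt}(1 − e^{−λt})²/(4θ)`. -/
theorem stmt11 {X : Type*} [MetricSpace X] [MeasurableSpace X] [BorelSpace X]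
    (μ : Measure X) [IsFiniteMeasure μ]
    (T : Lp ℝ 1 μ →ₗ[ℝ] Lp ℝ 1 μ)
    (hTpos : ∀ u : Lp ℝ 1 μ, (0 : X → ℝ) ≤ᵐ[μ] ⇑u → (0 : X → ℝ) ≤ᵐ[μ] ⇑(T u))
    (hTmass : ∀ u : Lp ℝ 1 μ, ∫ x, (T u) x ∂μ = ∫ x, u x ∂μ)
    (hTmax : ∀ (β : ℝ) (u : Lp ℝ 1 μ),
      ⇑u ≤ᵐ[μ] (fun _ => β) → ⇑(T u) ≤ᵐ[μ] (fun _ => β))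
    (θ : ℝ) (hθ : 0 < θ)
    (hultra : ∀ u : Lp ℝ 1 μ,
      eLpNorm (⇑(T u)) ⊤ μ ≤ ENNReal.ofReal (θ * ∫ x, |u x| ∂μ))
    (f : X → ℝ) (hfm : MemLp f ⊤ μ) (hf1 : Integrable f μ)
    (hfpos : 0 < ∫ x, |f x| ∂μ)
    (lam t : ℝ) (hlam : 0 < lam) (ht : 0 < t)
    (heig : ⇑(T (hf1.toL1 f)) =ᵐ[μ] fun x => Real.exp (-(lam * t)) * f x)
    (hχA : Integrable (({x | 0 < f x}).indicator (fun _ => (1 : ℝ))) μ)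
    (K : ℝ) (hK0 : 0 ≤ K)
    (hK : ∫ x, |({x | 0 < f x}).indicator (fun _ => (1 : ℝ)) x - (T (hχA.toL1 _)) x| ∂μ ≤ K) :
    Real.exp (-(lam * t)) * (1 - Real.exp (-(lam * t))) ^ 2 / (4 * θ) ≤ K := by
  classical
  set α : ℝ := Real.exp (-(lam * t)) with hαdef
  have hα0 : 0 < α := Real.exp_pos _
  have hα1 : α < 1 := by
    rw [hαdef, Real.exp_lt_one_iff]
    nlinarith
  set A : Set X := {x | 0 < f x} with hA
  set χ : X → ℝ := A.indicator (fun _ => (1 : ℝ)) with hχdef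
  have hχ01 : ∀ x, χ x = 0 ∨ χ x = 1 := by
    intro x
    by_cases hx : x ∈ A
    · right; simp [hχdef, hx]
    · left; simp [hχdef, hx]
  set g : X → ℝ := ⇑(T (hχA.toL1 χ)) with hgdef
  -- positive and negative parts
  set p : X → ℝ := fun x => max (f x) 0 with hpdef
  set n : X → ℝ := fun x => max (-f x) 0 with hndef
  have hp1 : Integrable p μ := hf1.pos_part
  have hn1 : Integrable n μ := hf1.neg.pos_part
  have hpn : ∀ x, p x - n x = f x := by
    intro x
    simp only [hpdef, hndef]
    rcases le_total 0 (f x) with h | h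
    · rw [max_eq_left h, max_eq_right (neg_nonpos.mpr h)]; ring
    · rw [max_eq_right h, max_eq_left (neg_nonneg.mpr h)]; ring
  have habs : ∀ x, p x + n x = |f x| := by
    intro x
    simp only [hpdef, hndef]
    rcases le_total 0 (f x) with h | h
    · rw [max_eq_left h, max_eq_right (neg_nonpos.mpr h), abs_of_nonneg h]; ring
    · rw [max_eq_right h, max_eq_left (neg_nonneg.mpr h), abs_of_nonpos h]; ring
  -- L∞ bound
  set C : ℝ := (eLpNorm f ⊤ μ).toReal with hCdef
  have hC0 : 0 ≤ C := ENNReal.toReal_nonneg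
  have hCfin : eLpNorm f ⊤ μ ≠ ⊤ := hfm.2.ne
  have hfC : ∀ᵐ x ∂μ, |f x| ≤ C := by
    have haes : ∀ᵐ y ∂μ, (‖f y‖₊ : ℝ≥0∞) ≤ eLpNormEssSup f μ := ae_le_eLpNormEssSup
    filter_upwards [haes] with x hx
    have h1 : (‖f x‖₊ : ℝ≥0∞) ≤ eLpNorm f ⊤ μ := by
      rwa [eLpNorm_exponent_top]
    have h2 := ENNReal.toReal_mono hCfin h1
    rw [← hCdef] at h2
    simpa [Real.norm_eq_abs] using h2
  -- ∫ f = 0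
  have hTf := hTmass (hf1.toL1 f)
  have hTfL : ∫ x, (T (hf1.toL1 f)) x ∂μ = α * ∫ x, f x ∂μ := by
    rw [integral_congr_ae heig, integral_const_mul]
  have hTfR : ∫ x, (hf1.toL1 f) x ∂μ = ∫ x, f x ∂μ :=
    integral_congr_ae (hf1.coeFn_toL1)
  have hintf : ∫ x, f x ∂μ = 0 := by
    rw [hTfL, hTfR] at hTf
    nlinarith [hTf]
  -- J
  set J : ℝ := ∫ x, p x ∂μ with hJdef
  have hnint : ∫ x, n x ∂μ = J := by
    have h1 : ∫ x, (p x - n x) ∂μ = 0 := by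
      rw [integral_congr_ae (Eventually.of_forall fun x => hpn x)]
      exact hintf
    rw [integral_sub hp1 hn1] at h1
    linarith
  have hIJ : ∫ x, |f x| ∂μ = 2 * J := by
    have h1 : ∫ x, (p x + n x) ∂μ = ∫ x, |f x| ∂μ :=
      integral_congr_ae (Eventually.of_forall fun x => habs x)
    rw [integral_add hp1 hn1, hnint] at h1
    linarith
  have hJ0 : 0 < J := by
    rw [hIJ] at hfpos; linarith
  -- P, N and the eigen identity
  set P : X → ℝ := ⇑(T (hp1.toL1 p)) with hPdef
  set N : X → ℝ := ⇑(T (hn1.toL1 n)) with hNdef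
  have hsplit : T (hf1.toL1 f) = T (hp1.toL1 p) - T (hn1.toL1 n) := by
    rw [← map_sub, ← Integrable.toL1_sub]
    congr 1
    exact (Integrable.toL1_eq_toL1_iff _ _ _ _).mpr
      (Eventually.of_forall fun x => (hpn x).symm)
  have hPN : (fun x => α * f x) =ᵐ[μ] fun x => P x - N x := by
    have h1 : ⇑(T (hp1.toL1 p) - T (hn1.toL1 n)) =ᵐ[μ] fun x => P x - N x := by
      filter_upwards [Lp.coeFn_sub (T (hp1.toL1 p)) (T (hn1.toL1 n))] with x hx
      simpa using hx
    calc (fun x => α * f x) =ᵐ[μ] ⇑(T (hf1.toL1 f)) := heig.symm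
      _ = ⇑(T (hp1.toL1 p) - T (hn1.toL1 n)) := by rw [hsplit]
      _ =ᵐ[μ] fun x => P x - N x := h1
  have hPint : ∫ x, P x ∂μ = J := by
    rw [hPdef, hTmass]
    exact integral_congr_ae (hp1.coeFn_toL1)
  -- P ≤ C • g a.e.
  have hq1 : Integrable (fun x => C * χ x - p x) μ := (hχA.const_mul C).sub hp1
  have hq1nn : (0 : X → ℝ) ≤ᵐ[μ] fun x => C * χ x - p x := by
    filter_upwards [hfC] with x hx
    by_cases hxA : x ∈ A
    · have h1 : χ x = 1 := by simp [hχdef, hxA]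
      have h2 : p x ≤ C := by
        have : p x ≤ |f x| := by
          simp only [hpdef]
          rcases le_total 0 (f x) with h | h
          · rw [max_eq_left h]; exact le_abs_self _
          · rw [max_eq_right h]; exact abs_nonneg _
        linarith
      simp only [Pi.zero_apply, h1, mul_one]
      linarith
    · have h1 : χ x = 0 := by simp [hχdef, hxA]
      have h2 : f x ≤ 0 := by
        by_contra h
        exact hxA (by simpa [hA] using lt_of_not_ge h)
      have h3 : p x = 0 := by simp [hpdef, h2]
      simp [h1, h3]
  have htoL1q1 : hq1.toL1 _ = C • hχA.toL1 χ - hp1.toL1 p := by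
    apply Lp.ext
    filter_upwards [hq1.coeFn_toL1,
      Lp.coeFn_sub (C • hχA.toL1 χ) (hp1.toL1 p),
      Lp.coeFn_smul C (hχA.toL1 χ), hχA.coeFn_toL1, hp1.coeFn_toL1] with x h1 h2 h3 h4 h5
    rw [h1, h2]
    simp only [Pi.sub_apply, h3, Pi.smul_apply, h4, h5, smul_eq_mul]
  have hPg : ∀ᵐ x ∂μ, P x ≤ C * g x := by
    have h0 := hTpos _ (by
      filter_upwards [hq1.coeFn_toL1, hq1nn] with x h1 h2
      rw [h1]; exact h2)
    rw [htoL1q1, map_sub, _root_.map_smul] at h0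
    filter_upwards [h0, Lp.coeFn_sub (C • T (hχA.toL1 χ)) (T (hp1.toL1 p)),
      Lp.coeFn_smul C (T (hχA.toL1 χ))] with x h1 h2 h3
    have : (0 : ℝ) ≤ C * g x - P x := by
      have := h1
      rw [h2] at this
      simpa [h3, smul_eq_mul, hgdef, hPdef] using this
    linarith
  -- N ≤ C * G1 - C * g a.e., with G1 ≤ 1
  set one : X → ℝ := fun _ => (1 : ℝ) with honedef
  have hone : Integrable one μ := integrable_const 1
  set G1 : X → ℝ := ⇑(T (hone.toL1 one)) with hG1def
  have hG1le : ∀ᵐ x ∂μ, G1 x ≤ 1 := by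
    have := hTmax 1 (hone.toL1 one) (by
      filter_upwards [hone.coeFn_toL1] with x h1
      rw [h1])
    filter_upwards [this] with x hx
    exact hx
  have hq2 : Integrable (fun x => C * (1 - χ x) - n x) μ :=
    (((integrable_const (1 : ℝ)).sub hχA).const_mul C).sub hn1
  have hq2nn : (0 : X → ℝ) ≤ᵐ[μ] fun x => C * (1 - χ x) - n x := by
    filter_upwards [hfC] with x hx
    by_cases hxA : x ∈ A
    · have h1 : χ x = 1 := by simp [hχdef, hxA, honedef]
      have h2 : 0 < f x := by simpa [hA] using hxA
      have h3 : n x = 0 := by simp [hndef]; linarith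
      simp [h1, h3]
    · have h1 : χ x = 0 := by simp [hχdef, hxA]
      have h2 : n x ≤ C := by
        have : n x ≤ |f x| := by
          simp only [hndef]
          rcases le_total 0 (f x) with h | h
          · rw [max_eq_right (neg_nonpos.mpr h)]; exact abs_nonneg _
          · rw [max_eq_left (neg_nonneg.mpr h), abs_of_nonpos h]
        linarith
      simp only [Pi.zero_apply, h1, sub_zero, mul_one]
      linarith
  have htoL1q2 : hq2.toL1 _ = (C • hone.toL1 one - C • hχA.toL1 χ) - hn1.toL1 n := by
    apply Lp.ext
    filter_upwards [hq2.coeFn_toL1,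
      Lp.coeFn_sub (C • hone.toL1 one - C • hχA.toL1 χ) (hn1.toL1 n),
      Lp.coeFn_sub (C • hone.toL1 one) (C • hχA.toL1 χ),
      Lp.coeFn_smul C (hone.toL1 one), Lp.coeFn_smul C (hχA.toL1 χ),
      hone.coeFn_toL1, hχA.coeFn_toL1, hn1.coeFn_toL1] with x h1 h2 h3 h4 h5 h6 h7 h8
    rw [h1, h2]
    simp only [Pi.sub_apply, h3, h4, h5, Pi.smul_apply, h6, h7, h8, smul_eq_mul]
    simp only [honedef]
    rw [show ((hχA.toL1 χ : X → ℝ) x : ℝ) = χ x from h7]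
    ring
  have hNg : ∀ᵐ x ∂μ, N x ≤ C * G1 x - C * g x := by
    have h0 := hTpos _ (by
      filter_upwards [hq2.coeFn_toL1, hq2nn] with x h1 h2
      rw [h1]; exact h2)
    rw [htoL1q2, map_sub, map_sub, _root_.map_smul, _root_.map_smul] at h0
    filter_upwards [h0,
      Lp.coeFn_sub (C • T (hone.toL1 one) - C • T (hχA.toL1 χ)) (T (hn1.toL1 n)),
      Lp.coeFn_sub (C • T (hone.toL1 one)) (C • T (hχA.toL1 χ)),
      Lp.coeFn_smul C (T (hone.toL1 one)), Lp.coeFn_smul C (T (hχA.toL1 χ))] with x h1 h2 h3 h4 h5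
    have h6 : (0 : ℝ) ≤ C * G1 x - C * g x - N x := by
      have := h1
      rw [h2] at this
      simp only [Pi.sub_apply] at this
      rw [h3] at this
      simp only [Pi.sub_apply, h4, h5, Pi.smul_apply, smul_eq_mul] at this
      simpa [hG1def, hgdef, hNdef] using this
    linarith
  -- main pointwise bound
  have hmain : ∀ᵐ x ∂μ, (1 - χ x) * P x + χ x * N x ≤ C * |χ x - g x| := by
    filter_upwards [hPg, hNg, hG1le] with x h1 h2 h3
    rcases hχ01 x with h | h
    · rw [h]
      have h4 : C * g x ≤ C * |(0 : ℝ) - g x| := by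
        have : g x ≤ |(0:ℝ) - g x| := by
          rw [zero_sub, abs_neg]; exact le_abs_self _
        exact mul_le_mul_of_nonneg_left this hC0
      simpa using le_trans h1 h4
    · rw [h]
      have h4 : N x ≤ C * (1 - g x) := by
        have : C * G1 x ≤ C * 1 := mul_le_mul_of_nonneg_left h3 hC0
        nlinarith
      have h5 : C * (1 - g x) ≤ C * |1 - g x| :=
        mul_le_mul_of_nonneg_left (le_abs_self _) hC0
      simpa using le_trans h4 h5
  -- integrability bits
  have hχbd : ∀ x, ‖χ x‖ ≤ 1 := by
    intro x; rcases hχ01 x with h | h <;> simp [h]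
  have hχm : AEStronglyMeasurable χ μ := hχA.aestronglyMeasurable
  have hint1 : Integrable (fun x => (1 - χ x) * P x) μ :=
    (L1.integrable_coeFn _).bdd_mul (aestronglyMeasurable_const.sub hχm)
      (c := 1) (Eventually.of_forall fun x => by
        rcases hχ01 x with h | h <;> simp [h])
  have hintχP : Integrable (fun x => χ x * P x) μ :=
    (L1.integrable_coeFn _).bdd_mul hχm (c := 1) (Eventually.of_forall hχbd)
  have hintχN : Integrable (fun x => χ x * N x) μ :=
    (L1.integrable_coeFn _).bdd_mul hχm (c := 1) (Eventually.of_forall hχbd)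
  have hintabs : Integrable (fun x => C * |χ x - g x|) μ :=
    ((hχA.sub (L1.integrable_coeFn _)).abs).const_mul C
  -- the integral bound
  have hS : ∫ x, ((1 - χ x) * P x + χ x * N x) ∂μ ≤ C * K := by
    calc ∫ x, ((1 - χ x) * P x + χ x * N x) ∂μ
        ≤ ∫ x, C * |χ x - g x| ∂μ :=
          integral_mono_ae (hint1.add hintχN) hintabs hmain
      _ = C * ∫ x, |χ x - g x| ∂μ := integral_const_mul C _
      _ ≤ C * K := mul_le_mul_of_nonneg_left hK hC0
  -- compute the integral
  have hχf : ∀ x, χ x * f x = p x := by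
    intro x
    by_cases hxA : x ∈ A
    · have h2 : 0 < f x := by simpa [hA] using hxA
      simp [hχdef, hxA, hpdef, max_eq_left h2.le, honedef]
    · have h2 : f x ≤ 0 := by
        by_contra h
        exact hxA (by simpa [hA] using lt_of_not_ge h)
      simp [hχdef, hxA, hpdef, max_eq_right h2, honedef]
  have hcross : ∫ x, χ x * P x ∂μ - ∫ x, χ x * N x ∂μ = α * J := by
    rw [← integral_sub hintχP hintχN]
    have h1 : (fun x => χ x * P x - χ x * N x) =ᵐ[μ] fun x => α * (χ x * f x) := by
      filter_upwards [hPN] with x hx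
      rw [← mul_sub, ← hx]; ring
    rw [integral_congr_ae h1, integral_const_mul]
    congr 1
    exact integral_congr_ae (Eventually.of_forall fun x => hχf x)
  have hsum : ∫ x, ((1 - χ x) * P x + χ x * N x) ∂μ = (1 - α) * J := by
    have i3 : Integrable (fun x => χ x * P x - χ x * N x) μ := hintχP.sub hintχN
    have i2 : ∫ x, (χ x * P x - χ x * N x) ∂μ = α * J := by
      rw [integral_sub hintχP hintχN]; exact hcross
    have e1 : (fun x => (1 - χ x) * P x + χ x * N x)
        = fun x => P x - (χ x * P x - χ x * N x) := by
      funext x; ring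
    rw [e1, integral_sub (L1.integrable_coeFn _) i3, hPint, i2]
    ring
  have hfinal1 : (1 - α) * J ≤ C * K := by rw [← hsum]; exact hS
  -- ultracontractivity
  have hCI : α * C ≤ θ * (2 * J) := by
    have h := hultra (hf1.toL1 f)
    have hL : eLpNorm (⇑(T (hf1.toL1 f))) ⊤ μ = ENNReal.ofReal α * eLpNorm f ⊤ μ := by
      rw [eLpNorm_congr_ae heig]
      have e1 : (fun x => α * f x) = α • f := rfl
      rw [e1, eLpNorm_const_smul, ← Real.enorm_eq_ofReal hα0.le]
    have hR : ∫ x, |(hf1.toL1 f) x| ∂μ = ∫ x, |f x| ∂μ :=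
      integral_congr_ae (by filter_upwards [hf1.coeFn_toL1] with x hx; rw [hx])
    rw [hL, hR] at h
    have h2 := ENNReal.toReal_mono (by exact ENNReal.ofReal_ne_top) h
    rw [ENNReal.toReal_mul, ENNReal.toReal_ofReal hα0.le,
      ENNReal.toReal_ofReal (by positivity : (0:ℝ) ≤ θ * ∫ x, |f x| ∂μ)] at h2
    rw [hIJ] at h2
    exact h2
  -- conclude
  exact stmt11_arith hα0 hα1 hθ hJ0 hK0 hfinal1 hCI
end

section
/- Let m be a measure on a measurable space X and let Q : L²(X,m) → L²(X,m) be a linear operator which is self-adjoint (∫ u·Qv dm = ∫ v·Qu dm for all u,v ∈ L²), maps L¹ ∩ L² into L¹ ∩ L² with ∫ Qu dm = ∫ u dm for all u ∈ L¹ ∩ L², satisfies the maximum principle in the form 0 ≤ u ≤ 1 a.e. implies 0 ≤ Qu ≤ 1 a.e., and satisfies ‖Qu‖_{L²} ≤ ρ·‖u‖_{L²} for some ρ ∈ [0,1] and all u ∈ L²(X,m). Let A ⊆ X be measurable with 0 < m(A) < ∞ and let K ≥ 0 satisfy ‖χ_A − Q(Q(χ_A))‖_{L¹} ≤ K. Then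 K ≥ 2·m(A)·(1 − ρ²). -/
open MeasureTheory Filter

/-- key step of Theorem th: impl Buser (ii).
Let `μ` be a measure and `Q : L² → L²` linear, self-adjoint, mapping `L¹ ∩ L²` into
`L¹ ∩ L²` with preservation of the integral, satisfying the maximum principle in the form
`0 ≤ u ≤ 1 ⟹ 0 ≤ Qu ≤ 1`, and with `‖Qu‖₂ ≤ ρ‖u‖₂` for some `ρ ∈ [0,1]` and all `u`.
If `A` is measurable with `0 < μ(A) < ∞` and `K ≥ 0` satisfies
`‖χ_A − Q(Q(χ_A))‖_{L¹} ≤ K`, then `K ≥ 2·μ(A)·(1 − ρ²)`. -/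
theorem stmt13 {X : Type*} [MeasurableSpace X] (μ : Measure X)
    (Q : Lp ℝ 2 μ →ₗ[ℝ] Lp ℝ 2 μ)
    (hself : ∀ u v : Lp ℝ 2 μ,
      ∫ x, u x * (Q v) x ∂μ = ∫ x, v x * (Q u) x ∂μ)
    (hmap : ∀ u : Lp ℝ 2 μ, Integrable (⇑u) μ →
      Integrable (⇑(Q u)) μ ∧ ∫ x, (Q u) x ∂μ = ∫ x, u x ∂μ)
    (hmax : ∀ u : Lp ℝ 2 μ,
      ((0 : X → ℝ) ≤ᵐ[μ] ⇑u ∧ ⇑u ≤ᵐ[μ] (fun _ => (1 : ℝ))) →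
      ((0 : X → ℝ) ≤ᵐ[μ] ⇑(Q u) ∧ ⇑(Q u) ≤ᵐ[μ] (fun _ => (1 : ℝ))))
    (ρ : ℝ) (hρ0 : 0 ≤ ρ) (hρ1 : ρ ≤ 1)
    (hcontr : ∀ u : Lp ℝ 2 μ, ‖Q u‖ ≤ ρ * ‖u‖)
    (A : Set X) (hA : MeasurableSet A) (hA0 : 0 < μ A) (hAfin : μ A < ⊤)
    (hχ : MemLp (A.indicator (fun _ => (1 : ℝ))) 2 μ)
    (K : ℝ)
    (hK : ∫ x, |A.indicator (fun _ => (1 : ℝ)) x - (Q (Q (hχ.toLp _))) x| ∂μ ≤ K) :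
    2 * (μ A).toReal * (1 - ρ ^ 2) ≤ K := by
  classical
  set f₀ : X → ℝ := A.indicator (fun _ => 1) with hf₀def
  set fL : Lp ℝ 2 μ := hχ.toLp _ with hfLdef
  have hfe : ⇑fL =ᵐ[μ] f₀ := hχ.coeFn_toLp
  have hf₀int : Integrable f₀ μ := by
    rw [hf₀def, integrable_indicator_iff hA]
    exact integrableOn_const hAfin.ne
  have hfLint : Integrable (⇑fL) μ := hf₀int.congr hfe.symm
  set g : Lp ℝ 2 μ := Q fL with hgdef
  set h : Lp ℝ 2 μ := Q g with hhdef
  obtain ⟨hgint, hgeq⟩ := hmap fL hfLint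
  obtain ⟨hhint, hheq⟩ := hmap g hgint
  have hf01 : ((0 : X → ℝ) ≤ᵐ[μ] ⇑fL ∧ ⇑fL ≤ᵐ[μ] (fun _ => (1 : ℝ))) := by
    constructor
    · filter_upwards [hfe] with x hx
      rw [hx]; exact Set.indicator_nonneg (fun _ _ => zero_le_one) x
    · filter_upwards [hfe] with x hx
      rw [hx]; by_cases hxA : x ∈ A <;> simp [hf₀def, Set.indicator, hxA]
  obtain ⟨hh0, hh1⟩ := hmax g (hmax fL hf01)
  -- the value of the integral of f₀
  have hμ : ∫ x, f₀ x ∂μ = (μ A).toReal := by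
    rw [hf₀def, integral_indicator_const (1 : ℝ) hA, smul_eq_mul, mul_one]; rfl
  -- integrals of g and h
  have hgI : ∫ x, g x ∂μ = (μ A).toReal := by
    rw [hgeq, integral_congr_ae hfe, hμ]
  have hhI : ∫ x, h x ∂μ = (μ A).toReal := by rw [hheq, hgI]
  -- ∫ f₀ * h = ‖g‖²
  have hinner : ∫ x, f₀ x * h x ∂μ = ‖g‖ ^ 2 := by
    have h1 : ∫ x, f₀ x * h x ∂μ = ∫ x, fL x * h x ∂μ := by
      refine integral_congr_ae ?_
      filter_upwards [hfe] with x hx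
      rw [hx]
    have h2 : ∫ x, fL x * (Q g) x ∂μ = ∫ x, g x * (Q fL) x ∂μ := hself fL g
    have h3 : (∫ x, g x * g x ∂μ) = ‖g‖ ^ 2 := by
      have := @real_inner_self_eq_norm_sq (Lp ℝ 2 μ) _ _ g
      rw [← this, MeasureTheory.L2.inner_def]
      simp [RCLike.inner_apply, mul_comm, sq]
    rw [h1]
    calc ∫ x, fL x * h x ∂μ = ∫ x, g x * g x ∂μ := by rw [hhdef]; exact h2
      _ = ‖g‖ ^ 2 := h3
  -- ‖fL‖² = μ A
  have hnf : ‖fL‖ ^ 2 = (μ A).toReal := by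
    have := @real_inner_self_eq_norm_sq (Lp ℝ 2 μ) _ _ fL
    rw [← this, MeasureTheory.L2.inner_def]
    have : ∫ x, (inner ℝ (fL x) (fL x) : ℝ) ∂μ = ∫ x, f₀ x ∂μ := by
      refine integral_congr_ae ?_
      filter_upwards [hfe] with x hx
      rw [RCLike.inner_apply]
      simp only [hx, conj_trivial]
      rw [hf₀def]
      by_cases hxA : x ∈ A <;> simp [Set.indicator, hxA]
    rw [this, hμ]
  have hg2 : ‖g‖ ^ 2 ≤ ρ ^ 2 * (μ A).toReal := by
    have h1 : ‖g‖ ≤ ρ * ‖fL‖ := hcontr fL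
    have h2 : ‖g‖ ^ 2 ≤ (ρ * ‖fL‖) ^ 2 := by
      apply sq_le_sq' _ h1
      have := norm_nonneg g
      nlinarith [norm_nonneg fL, mul_nonneg hρ0 (norm_nonneg fL)]
    calc ‖g‖ ^ 2 ≤ (ρ * ‖fL‖) ^ 2 := h2
      _ = ρ ^ 2 * ‖fL‖ ^ 2 := by ring
      _ = ρ ^ 2 * (μ A).toReal := by rw [hnf]
  -- pointwise identity for |f₀ - h|
  have hfhint : Integrable (fun x => f₀ x * h x) μ := by
    have : (fun x => f₀ x * h x) = A.indicator (⇑h) := by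
      funext x
      rw [hf₀def]
      by_cases hxA : x ∈ A <;> simp [Set.indicator, hxA]
    rw [this]
    exact hhint.indicator hA
  have hae : (fun x => |f₀ x - h x|) =ᵐ[μ] (fun x => f₀ x + h x - 2 * (f₀ x * h x)) := by
    filter_upwards [hh0, hh1] with x h0 h1
    rw [hf₀def]
    by_cases hxA : x ∈ A
    · simp only [Set.indicator_of_mem hxA]
      rw [abs_of_nonneg (by linarith [h1] : (0:ℝ) ≤ 1 - h x)]
      ring
    · simp only [Set.indicator_of_notMem hxA]
      rw [abs_sub_comm, sub_zero, abs_of_nonneg (h0 : (0:ℝ) ≤ h x)]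
      ring
  have hint : ∫ x, |f₀ x - h x| ∂μ
      = (μ A).toReal + (μ A).toReal - 2 * ‖g‖ ^ 2 := by
    have hadd : Integrable (fun x => f₀ x + h x) μ := hf₀int.add hhint
    have hmul : Integrable (fun x => 2 * (f₀ x * h x)) μ := hfhint.const_mul 2
    rw [integral_congr_ae hae, integral_sub hadd hmul, integral_add hf₀int hhint,
      integral_const_mul, hμ, hhI, hinner]
  nlinarith [hK, hint, hg2]
end
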